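/- arXiv:2401.16198 — 5 statements merged into one kernel-verified Lean document; each statement's English description precedes it below -/
import Mathlib

section
/- For every valid p-scaled dynamic contract π there exists a valid p-scaled dynamic contract π′ = ((α′^k, τ′^k, a′^k))_{k=1}^{K′} with Util(π′) ≥ Util(π) such that a′^k ≠ a′^{k+1} for all 1 ≤ k ≤ K′−1 and a′^k ≠ a′^{k+2} for all 1 ≤ k ≤ K′−2. -/
open Finset

/-- Expected reward `R_i = Σ_j F_{ij} r_j` of action `i`. -/
noncomputable def expRew (m : ℕ) (F : ℕ → ℕ → ℝ) (r : ℕ → ℝ) (i : ℕ) : ℝ :=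
  ∑ j ∈ Finset.Icc 1 m, F i j * r j

/-- Expected payment `P_i = Σ_j F_{ij} p_j` of action `i` under base contract `p`. -/
noncomputable def expPay (m : ℕ) (F : ℕ → ℕ → ℝ) (p : ℕ → ℝ) (i : ℕ) : ℝ :=
  ∑ j ∈ Finset.Icc 1 m, F i j * p j

/-- Basic assumptions of a principal-agent instance with base contract `p`. -/
def PInstance (n m : ℕ) (c : ℕ → ℝ) (F : ℕ → ℕ → ℝ) (r : ℕ → ℝ) (p : ℕ → ℝ) : Prop :=
  2 ≤ n ∧ (∀ i ∈ Finset.Icc 1 n, 0 ≤ c i) ∧ (∀ j ∈ Finset.Icc 1 m, 0 ≤ r j) ∧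
    (∀ i ∈ Finset.Icc 1 n,
      (∀ j ∈ Finset.Icc 1 m, 0 ≤ F i j) ∧ ∑ j ∈ Finset.Icc 1 m, F i j = 1) ∧
    (∀ j ∈ Finset.Icc 1 m, 0 ≤ p j)

/-- Best-response set `BR_p(x)` of the agent to the scaled contract `x·p`. -/
def BRp (n m : ℕ) (c : ℕ → ℝ) (F : ℕ → ℕ → ℝ) (p : ℕ → ℝ) (x : ℝ) : Set ℕ :=
  {i | i ∈ Finset.Icc 1 n ∧ ∀ j ∈ Finset.Icc 1 n,
    x * expPay m F p j - c j ≤ x * expPay m F p i - c i}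

/-- `β` records the breakpoints of `p`-scaled contracts: `β 0 = α_{0,1} = 0`,
`β i = α_{i,i+1}` (for `1 ≤ i ≤ n-1`), they are strictly increasing, and for
`α ≥ 0` action `i` is a best response iff `α_{i-1,i} ≤ α ≤ α_{i,i+1}`
(with `α_{n,n+1} = +∞`). -/
def Breakpoints (n m : ℕ) (c : ℕ → ℝ) (F : ℕ → ℕ → ℝ) (p : ℕ → ℝ) (β : ℕ → ℝ) : Prop :=
  β 0 = 0 ∧ (∀ i, i + 1 ≤ n - 1 → β i < β (i + 1)) ∧ (0 < β 1) ∧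
    (∀ x : ℝ, 0 ≤ x → ∀ i, 1 ≤ i → i ≤ n →
      (i ∈ BRp n m c F p x ↔ (β (i - 1) ≤ x ∧ (i < n → x ≤ β i))))

/-- A `p`-scaled dynamic contract with `K` segments (indexed `1,…,K`):
scalars `α`, durations `τ`, and actions `a`. -/
structure DSC where
  K : ℕ
  α : ℕ → ℝ
  τ : ℕ → ℝ
  a : ℕ → ℕ

namespace DSC

/-- Total duration of the first `k` segments. -/
noncomputable def Tsum (π : DSC) (k : ℕ) : ℝ := ∑ j ∈ Finset.Icc 1 k, π.τ j

/-- Time-averaged scalar `ᾱ^k` after the first `k` segments. -/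
noncomputable def avg (π : DSC) (k : ℕ) : ℝ :=
  (∑ j ∈ Finset.Icc 1 k, π.α j * π.τ j) / π.Tsum k

/-- Validity of a `p`-scaled dynamic contract. -/
def Valid (n m : ℕ) (c : ℕ → ℝ) (F : ℕ → ℕ → ℝ) (p : ℕ → ℝ) (π : DSC) : Prop :=
  1 ≤ π.K ∧
    (∀ k ∈ Finset.Icc 1 π.K, 0 ≤ π.α k ∧ 0 < π.τ k ∧ π.a k ∈ Finset.Icc 1 n) ∧
    (∀ k ∈ Finset.Icc 1 π.K, π.a k ∈ BRp n m c F p (π.avg k)) ∧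
    (∀ k, 2 ≤ k → k ≤ π.K → π.a k ∈ BRp n m c F p (π.avg (k - 1)))

/-- Time-averaged principal utility. -/
noncomputable def Util (m : ℕ) (F : ℕ → ℕ → ℝ) (r : ℕ → ℝ) (p : ℕ → ℝ) (π : DSC) : ℝ :=
  (∑ k ∈ Finset.Icc 1 π.K,
    π.τ k * (expRew m F r (π.a k) - π.α k * expPay m F p (π.a k))) / π.Tsum π.K

/-- Free-fall: the zero contract is offered on every segment after the first. -/
def FreeFall (π : DSC) : Prop := ∀ k, 2 ≤ k → k ≤ π.K → π.α k = 0

end DSC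


namespace NRRaux

noncomputable def Asum (π : DSC) (k : ℕ) : ℝ := ∑ j ∈ Finset.Icc 1 k, π.α j * π.τ j

noncomputable def Usum (m : ℕ) (F : ℕ → ℕ → ℝ) (r : ℕ → ℝ) (p : ℕ → ℝ)
    (π : DSC) (k : ℕ) : ℝ :=
  ∑ j ∈ Finset.Icc 1 k, π.τ j * (expRew m F r (π.a j) - π.α j * expPay m F p (π.a j))

lemma avg_def (π : DSC) (k : ℕ) : π.avg k = Asum π k / π.Tsum k := rfl

lemma util_def (m : ℕ) (F : ℕ → ℕ → ℝ) (r : ℕ → ℝ) (p : ℕ → ℝ) (π : DSC) :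
    π.Util m F r p = Usum m F r p π π.K / π.Tsum π.K := rfl

lemma Icc_Ioc (k : ℕ) : Finset.Icc 1 k = Finset.Ioc 0 k := Finset.Icc_add_one_left_eq_Ioc 0 k

lemma sum_split (g : ℕ → ℝ) {k l : ℕ} (hkl : k ≤ l) :
    ∑ j ∈ Finset.Icc 1 l, g j
      = (∑ j ∈ Finset.Icc 1 k, g j) + ∑ j ∈ Finset.Ioc k l, g j := by
  rw [Icc_Ioc, Icc_Ioc, ← Finset.sum_Ioc_consecutive g (Nat.zero_le k) hkl]

lemma sum_shift (g : ℕ → ℝ) (q q' : ℕ) : ∀ d : ℕ,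
    ∑ j ∈ Finset.Ioc q' (q' + d), g (j - q' + q) = ∑ j ∈ Finset.Ioc q (q + d), g j := by
  intro d
  induction d with
  | zero => simp
  | succ d ih =>
      rw [← Nat.add_assoc, Finset.sum_Ioc_succ_top (Nat.le_add_right q' d),
        ← Nat.add_assoc, Finset.sum_Ioc_succ_top (Nat.le_add_right q d), ih]
      have h : q' + d + 1 - q' + q = q + d + 1 := by omega
      rw [h]

noncomputable def splice (π ρ : DSC) (q : ℕ) : DSC :=
  ⟨ρ.K + (π.K - q),
   fun l => if l ≤ ρ.K then ρ.α l else π.α (l - ρ.K + q),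
   fun l => if l ≤ ρ.K then ρ.τ l else π.τ (l - ρ.K + q),
   fun l => if l ≤ ρ.K then ρ.a l else π.a (l - ρ.K + q)⟩

lemma splice_ite_sum (G H : ℕ → ℝ) (ρK q l : ℕ) (hl : ρK ≤ l) :
    ∑ j ∈ Finset.Icc 1 l, (if j ≤ ρK then G j else H (j - ρK + q)) =
      (∑ j ∈ Finset.Icc 1 ρK, G j) + ∑ j ∈ Finset.Ioc q (l - ρK + q), H j := by
  rw [sum_split _ hl]
  congr 1
  · exact Finset.sum_congr rfl fun j hj => if_pos (Finset.mem_Icc.mp hj).2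
  · rw [Finset.sum_congr rfl
      (fun j hj => if_neg (by have := (Finset.mem_Ioc.mp hj).1; omega))]
    have h := sum_shift H q ρK (l - ρK)
    rw [Nat.add_sub_cancel' hl] at h
    rw [h]
    have h2 : q + (l - ρK) = l - ρK + q := by omega
    rw [h2]

lemma splice_ite_sum_low (G H : ℕ → ℝ) (ρK q l : ℕ) (hl : l ≤ ρK) :
    ∑ j ∈ Finset.Icc 1 l, (if j ≤ ρK then G j else H (j - ρK + q)) =
      ∑ j ∈ Finset.Icc 1 l, G j :=
  Finset.sum_congr rfl fun j hj => if_pos (le_trans (Finset.mem_Icc.mp hj).2 hl)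

lemma splice_Tsum_low (π ρ : DSC) (q l : ℕ) (hl : l ≤ ρ.K) :
    (splice π ρ q).Tsum l = ρ.Tsum l := by
  unfold DSC.Tsum splice
  exact splice_ite_sum_low ρ.τ (fun j => π.τ j) ρ.K q l hl

lemma splice_Asum_low (π ρ : DSC) (q l : ℕ) (hl : l ≤ ρ.K) :
    Asum (splice π ρ q) l = Asum ρ l := by
  unfold Asum splice
  rw [Finset.sum_congr rfl (fun j _ => show _ = if j ≤ ρ.K then ρ.α j * ρ.τ j
    else π.α (j - ρ.K + q) * π.τ (j - ρ.K + q) by by_cases h : j ≤ ρ.K <;> simp [h])]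
  exact splice_ite_sum_low (fun j => ρ.α j * ρ.τ j)
    (fun j => π.α j * π.τ j) ρ.K q l hl

lemma splice_avg_low (π ρ : DSC) (q l : ℕ) (hl : l ≤ ρ.K) :
    (splice π ρ q).avg l = ρ.avg l := by
  rw [avg_def, avg_def, splice_Tsum_low _ _ _ _ hl, splice_Asum_low _ _ _ _ hl]

lemma splice_Tsum_hi (π ρ : DSC) (q l : ℕ) (hl : ρ.K ≤ l)
    (hT : ρ.Tsum ρ.K = π.Tsum q) :
    (splice π ρ q).Tsum l = π.Tsum (l - ρ.K + q) := by
  have e : (splice π ρ q).Tsum l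
      = ρ.Tsum ρ.K + ∑ j ∈ Finset.Ioc q (l - ρ.K + q), π.τ j :=
    splice_ite_sum ρ.τ (fun j => π.τ j) ρ.K q l hl
  have h' : π.Tsum (l - ρ.K + q)
      = π.Tsum q + ∑ j ∈ Finset.Ioc q (l - ρ.K + q), π.τ j :=
    sum_split π.τ (Nat.le_add_left q (l - ρ.K))
  rw [e, hT, h']

lemma splice_Asum_hi (π ρ : DSC) (q l : ℕ) (hl : ρ.K ≤ l)
    (hA : Asum ρ ρ.K = Asum π q) :
    Asum (splice π ρ q) l = Asum π (l - ρ.K + q) := by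
  have e0 : Asum (splice π ρ q) l
      = ∑ j ∈ Finset.Icc 1 l, (if j ≤ ρ.K then ρ.α j * ρ.τ j
          else π.α (j - ρ.K + q) * π.τ (j - ρ.K + q)) :=
    Finset.sum_congr rfl (fun j _ => show _ = if j ≤ ρ.K then ρ.α j * ρ.τ j
      else π.α (j - ρ.K + q) * π.τ (j - ρ.K + q) by by_cases h : j ≤ ρ.K <;> simp [splice, h])
  have e : Asum (splice π ρ q) l
      = Asum ρ ρ.K + ∑ j ∈ Finset.Ioc q (l - ρ.K + q), π.α j * π.τ j := by
    rw [e0]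
    exact splice_ite_sum (fun j => ρ.α j * ρ.τ j) (fun j => π.α j * π.τ j) ρ.K q l hl
  have h' : Asum π (l - ρ.K + q)
      = Asum π q + ∑ j ∈ Finset.Ioc q (l - ρ.K + q), π.α j * π.τ j :=
    sum_split (fun j => π.α j * π.τ j) (Nat.le_add_left q (l - ρ.K))
  rw [e, hA, h']

lemma splice_avg_hi (π ρ : DSC) (q l : ℕ) (hl : ρ.K ≤ l)
    (hT : ρ.Tsum ρ.K = π.Tsum q) (hA : Asum ρ ρ.K = Asum π q) :
    (splice π ρ q).avg l = π.avg (l - ρ.K + q) := by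
  rw [avg_def, avg_def, splice_Tsum_hi _ _ _ _ hl hT, splice_Asum_hi _ _ _ _ hl hA]

lemma splice_Usum_hi (m : ℕ) (F : ℕ → ℕ → ℝ) (r p : ℕ → ℝ) (π ρ : DSC) (q l : ℕ)
    (hl : ρ.K ≤ l) :
    Usum m F r p (splice π ρ q) l =
      Usum m F r p ρ ρ.K +
        (Usum m F r p π (l - ρ.K + q) - Usum m F r p π q) := by
  have e0 : Usum m F r p (splice π ρ q) l
      = ∑ j ∈ Finset.Icc 1 l,
          (if j ≤ ρ.K then ρ.τ j * (expRew m F r (ρ.a j) - ρ.α j * expPay m F p (ρ.a j))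
           else π.τ (j - ρ.K + q) * (expRew m F r (π.a (j - ρ.K + q))
             - π.α (j - ρ.K + q) * expPay m F p (π.a (j - ρ.K + q)))) :=
    Finset.sum_congr rfl (fun j _ => show _ = _
      by by_cases h : j ≤ ρ.K <;> simp [splice, h])
  have e : Usum m F r p (splice π ρ q) l
      = Usum m F r p ρ ρ.K + ∑ j ∈ Finset.Ioc q (l - ρ.K + q),
          π.τ j * (expRew m F r (π.a j) - π.α j * expPay m F p (π.a j)) := by
    rw [e0]
    exact splice_ite_sum
      (fun j => ρ.τ j * (expRew m F r (ρ.a j) - ρ.α j * expPay m F p (ρ.a j)))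
      (fun j => π.τ j * (expRew m F r (π.a j) - π.α j * expPay m F p (π.a j))) ρ.K q l hl
  have h' : Usum m F r p π (l - ρ.K + q)
      = Usum m F r p π q + ∑ j ∈ Finset.Ioc q (l - ρ.K + q),
          π.τ j * (expRew m F r (π.a j) - π.α j * expPay m F p (π.a j)) :=
    sum_split (fun j => π.τ j * (expRew m F r (π.a j) - π.α j * expPay m F p (π.a j)))
      (Nat.le_add_left q (l - ρ.K))
  rw [e, h']
  ring

lemma Tsum_pos (n mm : ℕ) (c : ℕ → ℝ) (F : ℕ → ℕ → ℝ) (p : ℕ → ℝ) (π : DSC)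
    (hπ : π.Valid n mm c F p) (k : ℕ) (h1 : 1 ≤ k) (h2 : k ≤ π.K) : 0 < π.Tsum k :=
  Finset.sum_pos (fun j hj => (hπ.2.1 j (by
      rw [Finset.mem_Icc] at hj ⊢; omega)).2.1)
    (Finset.nonempty_Icc.mpr h1)

lemma Asum_nonneg (n mm : ℕ) (c : ℕ → ℝ) (F : ℕ → ℕ → ℝ) (p : ℕ → ℝ) (π : DSC)
    (hπ : π.Valid n mm c F p) (k : ℕ) (h2 : k ≤ π.K) : 0 ≤ Asum π k :=
  Finset.sum_nonneg fun j hj => by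
    have hj' : j ∈ Finset.Icc 1 π.K := by rw [Finset.mem_Icc] at hj ⊢; omega
    exact mul_nonneg (hπ.2.1 j hj').1 (le_of_lt (hπ.2.1 j hj').2.1)

lemma avg_nonneg (n mm : ℕ) (c : ℕ → ℝ) (F : ℕ → ℕ → ℝ) (p : ℕ → ℝ) (π : DSC)
    (hπ : π.Valid n mm c F p) (k : ℕ) (h1 : 1 ≤ k) (h2 : k ≤ π.K) : 0 ≤ π.avg k := by
  rw [avg_def]
  exact div_nonneg (Asum_nonneg n mm c F p π hπ k h2)
    (le_of_lt (Tsum_pos n mm c F p π hπ k h1 h2))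

lemma splice_valid (n mm : ℕ) (c : ℕ → ℝ) (F : ℕ → ℕ → ℝ) (p : ℕ → ℝ)
    (π ρ : DSC) (q : ℕ) (hq1 : 1 ≤ q) (hqK : q ≤ π.K)
    (hπ : π.Valid n mm c F p) (hρ : ρ.Valid n mm c F p)
    (hT : ρ.Tsum ρ.K = π.Tsum q) (hA : Asum ρ ρ.K = Asum π q) :
    (splice π ρ q).Valid n mm c F p := by
  have hKs : (splice π ρ q).K = ρ.K + (π.K - q) := rfl
  have hαs : ∀ l, (splice π ρ q).α l = if l ≤ ρ.K then ρ.α l else π.α (l - ρ.K + q) :=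
    fun l => rfl
  have hτs : ∀ l, (splice π ρ q).τ l = if l ≤ ρ.K then ρ.τ l else π.τ (l - ρ.K + q) :=
    fun l => rfl
  have has : ∀ l, (splice π ρ q).a l = if l ≤ ρ.K then ρ.a l else π.a (l - ρ.K + q) :=
    fun l => rfl
  refine ⟨by have := hρ.1; rw [hKs]; omega, ?_, ?_, ?_⟩
  · intro l hl
    rw [Finset.mem_Icc, hKs] at hl
    by_cases h : l ≤ ρ.K
    · rw [hαs, hτs, has, if_pos h, if_pos h, if_pos h]
      exact hρ.2.1 l (Finset.mem_Icc.mpr ⟨hl.1, h⟩)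
    · rw [hαs, hτs, has, if_neg h, if_neg h, if_neg h]
      exact hπ.2.1 (l - ρ.K + q) (Finset.mem_Icc.mpr ⟨by omega, by omega⟩)
  · intro l hl
    rw [Finset.mem_Icc, hKs] at hl
    by_cases h : l ≤ ρ.K
    · rw [has, if_pos h, splice_avg_low _ _ _ _ h]
      exact hρ.2.2.1 l (Finset.mem_Icc.mpr ⟨hl.1, h⟩)
    · rw [has, if_neg h, splice_avg_hi _ _ _ _ (by omega) hT hA]
      exact hπ.2.2.1 (l - ρ.K + q) (Finset.mem_Icc.mpr ⟨by omega, by omega⟩)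
  · intro l hl2 hlK
    rw [hKs] at hlK
    by_cases h : l ≤ ρ.K
    · rw [has, if_pos h, splice_avg_low _ _ _ _ (by omega)]
      exact hρ.2.2.2 l hl2 h
    · rcases Nat.lt_or_ge ρ.K (l - 1) with h' | h'
      · rw [has, if_neg h, splice_avg_hi _ _ _ _ (by omega) hT hA]
        have e : l - 1 - ρ.K + q = (l - ρ.K + q) - 1 := by omega
        rw [e]
        exact hπ.2.2.2 (l - ρ.K + q) (by omega) (by omega)
      · -- l = ρ.K + 1
        have hl' : l = ρ.K + 1 := by omega
        rw [has, if_neg h, splice_avg_low _ _ _ _ (by omega)]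
        have e1 : ρ.avg (l - 1) = π.avg q := by
          have : l - 1 = ρ.K := by omega
          rw [this, avg_def, avg_def, hT, hA]
        rw [e1]
        have e2 : l - ρ.K + q = q + 1 := by omega
        rw [e2]
        have := hπ.2.2.2 (q + 1) (by omega) (by omega)
        simpa using this

lemma beta_mono (n : ℕ) (β : ℕ → ℝ) (hmono : ∀ i, i + 1 ≤ n - 1 → β i < β (i + 1)) :
    ∀ b a : ℕ, a < b → b ≤ n - 1 → β a < β b := by
  intro b
  induction b with
  | zero => intro a ha _; omega
  | succ b ih =>
      intro a ha hb
      rcases Nat.lt_or_ge a b with h | h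
      · exact lt_trans (ih a h (by omega)) (hmono b hb)
      · have he : a = b := by omega
        subst he; exact hmono a hb

lemma BR_pin (n mm : ℕ) (c : ℕ → ℝ) (F : ℕ → ℕ → ℝ) (p : ℕ → ℝ) (β : ℕ → ℝ)
    (hβ : Breakpoints n mm c F p β)
    {x y : ℝ} (hx : 0 ≤ x) (hy : 0 ≤ y) {i j : ℕ}
    (hi1 : 1 ≤ i) (hjn : j ≤ n) (hij : i < j)
    (hix : i ∈ BRp n mm c F p x) (hjx : j ∈ BRp n mm c F p x)
    (hiy : i ∈ BRp n mm c F p y) (hjy : j ∈ BRp n mm c F p y) : x = y := by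
  obtain ⟨hβ0, hmono, hβ1, hchar⟩ := hβ
  have key : ∀ z : ℝ, 0 ≤ z → i ∈ BRp n mm c F p z → j ∈ BRp n mm c F p z → z = β i := by
    intro z hz hiz hjz
    have h1 := ((hchar z hz i hi1 (by omega)).mp hiz).2 (by omega)
    have h2 := ((hchar z hz j (by omega) hjn).mp hjz).1
    have hji : j - 1 = i := by
      by_contra hne
      have hlt : i < j - 1 := by omega
      have := beta_mono n β hmono (j - 1) i hlt (by omega)
      linarith
    rw [hji] at h2
    linarith
  rw [key x hx hix hjx, key y hy hiy hjy]

lemma avg_pin (n mm : ℕ) (c : ℕ → ℝ) (F : ℕ → ℕ → ℝ) (p : ℕ → ℝ) (β : ℕ → ℝ)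
    (hβ : Breakpoints n mm c F p β) (π : DSC) (hπ : π.Valid n mm c F p) (k : ℕ)
    (h1 : 1 ≤ k) (h2 : k + 2 ≤ π.K)
    (hne : π.a k ≠ π.a (k + 1)) (heq : π.a k = π.a (k + 2)) :
    π.avg k = π.avg (k + 1) := by
  have hx := avg_nonneg n mm c F p π hπ k h1 (by omega)
  have hy := avg_nonneg n mm c F p π hπ (k + 1) (by omega) (by omega)
  have hik : π.a k ∈ BRp n mm c F p (π.avg k) :=
    hπ.2.2.1 k (Finset.mem_Icc.mpr ⟨h1, by omega⟩)
  have hjk : π.a (k + 1) ∈ BRp n mm c F p (π.avg k) := by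
    have := hπ.2.2.2 (k + 1) (by omega) (by omega)
    simpa using this
  have hjk1 : π.a (k + 1) ∈ BRp n mm c F p (π.avg (k + 1)) :=
    hπ.2.2.1 (k + 1) (Finset.mem_Icc.mpr ⟨by omega, by omega⟩)
  have hik1 : π.a k ∈ BRp n mm c F p (π.avg (k + 1)) := by
    have := hπ.2.2.2 (k + 2) (by omega) h2
    rw [heq]
    simpa using this
  have hi_rng : π.a k ∈ Finset.Icc 1 n := hik.1
  have hj_rng : π.a (k + 1) ∈ Finset.Icc 1 n := hjk1.1
  rw [Finset.mem_Icc] at hi_rng hj_rng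
  rcases Nat.lt_or_ge (π.a k) (π.a (k + 1)) with h | h
  · exact BR_pin n mm c F p β hβ hx hy hi_rng.1 hj_rng.2 h hik hjk hik1 hjk1
  · have h' : π.a (k + 1) < π.a k := by omega
    exact BR_pin n mm c F p β hβ hx hy hj_rng.1 hi_rng.2 h' hjk hik hjk1 hik1

noncomputable def mergeC (π : DSC) (k : ℕ) : DSC :=
  ⟨k,
   fun l => if l = k then (π.α k * π.τ k + π.α (k+1) * π.τ (k+1)) / (π.τ k + π.τ (k+1))
            else π.α l,
   fun l => if l = k then π.τ k + π.τ (k+1) else π.τ l,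
   π.a⟩

lemma mergeC_Tsum_low (π : DSC) (k l : ℕ) (hl : l < k) : (mergeC π k).Tsum l = π.Tsum l :=
  Finset.sum_congr rfl fun j hj => by
    have := (Finset.mem_Icc.mp hj).2
    show (if j = k then _ else _) = _
    rw [if_neg (by omega)]

lemma mergeC_Asum_low (π : DSC) (k l : ℕ) (hl : l < k) : Asum (mergeC π k) l = Asum π l :=
  Finset.sum_congr rfl fun j hj => by
    have := (Finset.mem_Icc.mp hj).2
    show (if j = k then _ else _) * (if j = k then _ else _) = _
    rw [if_neg (by omega), if_neg (by omega)]

lemma mergeC_avg_low (π : DSC) (k l : ℕ) (hl : l < k) : (mergeC π k).avg l = π.avg l := by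
  rw [avg_def, avg_def, mergeC_Tsum_low _ _ _ hl, mergeC_Asum_low _ _ _ hl]

lemma mergeC_Tsum_top (π : DSC) (k : ℕ) (hk1 : 1 ≤ k) :
    (mergeC π k).Tsum k = π.Tsum (k + 1) := by
  have e : (mergeC π k).Tsum k
      = ∑ j ∈ Finset.Icc 1 k, (π.τ j + if j = k then π.τ (k+1) else 0) := by
    refine Finset.sum_congr rfl fun j hj => ?_
    show (if j = k then _ else _) = _
    by_cases h : j = k
    · subst h; rw [if_pos rfl, if_pos rfl]
    · rw [if_neg h, if_neg h, add_zero]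
  rw [e, Finset.sum_add_distrib, Finset.sum_ite_eq' (Finset.Icc 1 k) k (fun _ => π.τ (k+1)),
    if_pos (Finset.mem_Icc.mpr ⟨hk1, le_refl k⟩)]
  have h2 : π.Tsum (k+1) = π.Tsum k + π.τ (k+1) := Finset.sum_Icc_succ_top (by omega) π.τ
  rw [h2]
  rfl

lemma mergeC_Asum_top (π : DSC) (k : ℕ) (hk1 : 1 ≤ k) (hτ : π.τ k + π.τ (k+1) ≠ 0) :
    Asum (mergeC π k) k = Asum π (k + 1) := by
  have e : Asum (mergeC π k) k
      = ∑ j ∈ Finset.Icc 1 k, (π.α j * π.τ j + if j = k then π.α (k+1) * π.τ (k+1) else 0) := by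
    refine Finset.sum_congr rfl fun j hj => ?_
    show (if j = k then _ else _) * (if j = k then _ else _) = _
    by_cases h : j = k
    · subst h
      rw [if_pos rfl, if_pos rfl, if_pos rfl, div_mul_cancel₀ _ hτ]
    · rw [if_neg h, if_neg h, if_neg h, add_zero]
  rw [e, Finset.sum_add_distrib,
    Finset.sum_ite_eq' (Finset.Icc 1 k) k (fun _ => π.α (k+1) * π.τ (k+1)),
    if_pos (Finset.mem_Icc.mpr ⟨hk1, le_refl k⟩)]
  have h2 : Asum π (k+1) = Asum π k + π.α (k+1) * π.τ (k+1) :=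
    Finset.sum_Icc_succ_top (by omega) _
  rw [h2]
  rfl

lemma mergeC_avg_top (π : DSC) (k : ℕ) (hk1 : 1 ≤ k) (hτ : π.τ k + π.τ (k+1) ≠ 0) :
    (mergeC π k).avg k = π.avg (k + 1) := by
  rw [avg_def, avg_def, mergeC_Tsum_top _ _ hk1, mergeC_Asum_top _ _ hk1 hτ]

lemma mergeC_Usum_top (mm : ℕ) (F : ℕ → ℕ → ℝ) (r p : ℕ → ℝ) (π : DSC) (k : ℕ)
    (hk1 : 1 ≤ k) (hτ : π.τ k + π.τ (k+1) ≠ 0) (ha : π.a (k+1) = π.a k) :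
    Usum mm F r p (mergeC π k) k = Usum mm F r p π (k + 1) := by
  have e : Usum mm F r p (mergeC π k) k
      = ∑ j ∈ Finset.Icc 1 k,
          (π.τ j * (expRew mm F r (π.a j) - π.α j * expPay mm F p (π.a j))
            + if j = k then π.τ (k+1) * (expRew mm F r (π.a (k+1))
                - π.α (k+1) * expPay mm F p (π.a (k+1))) else 0) := by
    refine Finset.sum_congr rfl fun j hj => ?_
    show (if j = k then _ else _) * (expRew mm F r (π.a j)
        - (if j = k then _ else _) * expPay mm F p (π.a j)) = _
    by_cases h : j = k
    · subst h
      rw [if_pos rfl, if_pos rfl, if_pos rfl, ha]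
      field_simp
      ring
    · rw [if_neg h, if_neg h, if_neg h, add_zero]
  rw [e, Finset.sum_add_distrib, Finset.sum_ite_eq' (Finset.Icc 1 k)
    k (fun _ => π.τ (k+1) * (expRew mm F r (π.a (k+1)) - π.α (k+1) * expPay mm F p (π.a (k+1)))),
    if_pos (Finset.mem_Icc.mpr ⟨hk1, le_refl k⟩)]
  have h2 : Usum mm F r p π (k+1) = Usum mm F r p π k
      + π.τ (k+1) * (expRew mm F r (π.a (k+1)) - π.α (k+1) * expPay mm F p (π.a (k+1))) :=
    Finset.sum_Icc_succ_top (by omega) _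
  rw [h2]
  rfl

lemma mergeC_α (π : DSC) (k l : ℕ) : (mergeC π k).α l
    = if l = k then (π.α k * π.τ k + π.α (k+1) * π.τ (k+1)) / (π.τ k + π.τ (k+1))
      else π.α l := rfl

lemma mergeC_τ (π : DSC) (k l : ℕ) : (mergeC π k).τ l
    = if l = k then π.τ k + π.τ (k+1) else π.τ l := rfl

lemma mergeC_a (π : DSC) (k l : ℕ) : (mergeC π k).a l = π.a l := rfl

lemma mergeC_valid (n mm : ℕ) (c : ℕ → ℝ) (F : ℕ → ℕ → ℝ) (p : ℕ → ℝ) (π : DSC) (k : ℕ)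
    (hπ : π.Valid n mm c F p) (hk1 : 1 ≤ k) (hk : k + 1 ≤ π.K) (ha : π.a (k+1) = π.a k) :
    (mergeC π k).Valid n mm c F p := by
  have hKK : (mergeC π k).K = k := rfl
  have hvk := hπ.2.1 k (Finset.mem_Icc.mpr ⟨hk1, by omega⟩)
  have hvk1 := hπ.2.1 (k+1) (Finset.mem_Icc.mpr ⟨by omega, hk⟩)
  have hτpos : 0 < π.τ k + π.τ (k+1) := by linarith [hvk.2.1, hvk1.2.1]
  refine ⟨hk1, ?_, ?_, ?_⟩
  · intro l hl
    rw [Finset.mem_Icc, hKK] at hl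
    refine ⟨?_, ?_, ?_⟩
    · rw [mergeC_α]
      by_cases h : l = k
      · rw [if_pos h]
        exact div_nonneg (add_nonneg (mul_nonneg hvk.1 hvk.2.1.le)
          (mul_nonneg hvk1.1 hvk1.2.1.le)) hτpos.le
      · rw [if_neg h]
        exact (hπ.2.1 l (Finset.mem_Icc.mpr ⟨hl.1, by omega⟩)).1
    · rw [mergeC_τ]
      by_cases h : l = k
      · rw [if_pos h]; exact hτpos
      · rw [if_neg h]
        exact (hπ.2.1 l (Finset.mem_Icc.mpr ⟨hl.1, by omega⟩)).2.1
    · rw [mergeC_a]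
      exact (hπ.2.1 l (Finset.mem_Icc.mpr ⟨hl.1, by omega⟩)).2.2
  · intro l hl
    rw [Finset.mem_Icc, hKK] at hl
    rw [mergeC_a]
    by_cases h : l = k
    · subst h
      rw [mergeC_avg_top _ _ hl.1 hτpos.ne', ← ha]
      exact hπ.2.2.1 (l+1) (Finset.mem_Icc.mpr ⟨by omega, hk⟩)
    · rw [mergeC_avg_low _ _ _ (by omega)]
      exact hπ.2.2.1 l (Finset.mem_Icc.mpr ⟨hl.1, by omega⟩)
  · intro l h2 hlk
    rw [hKK] at hlk
    rw [mergeC_a, mergeC_avg_low _ _ _ (by omega)]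
    exact hπ.2.2.2 l h2 (by omega)

noncomputable def oneC (x T : ℝ) (b : ℕ) : DSC := ⟨1, fun _ => x, fun _ => T, fun _ => b⟩

lemma oneC_Tsum (x T : ℝ) (b : ℕ) : (oneC x T b).Tsum 1 = T := by
  show ∑ j ∈ Finset.Icc 1 1, _ = T
  rw [Finset.Icc_self, Finset.sum_singleton]
  rfl

lemma oneC_Asum (x T : ℝ) (b : ℕ) : Asum (oneC x T b) 1 = x * T := by
  show ∑ j ∈ Finset.Icc 1 1, _ = x * T
  rw [Finset.Icc_self, Finset.sum_singleton]
  rfl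

lemma oneC_Usum (mm : ℕ) (F : ℕ → ℕ → ℝ) (r p : ℕ → ℝ) (x T : ℝ) (b : ℕ) :
    Usum mm F r p (oneC x T b) 1 = T * (expRew mm F r b - x * expPay mm F p b) := by
  show ∑ j ∈ Finset.Icc 1 1, _ = _
  rw [Finset.Icc_self, Finset.sum_singleton]
  rfl

lemma oneC_avg (x T : ℝ) (b : ℕ) (hT : T ≠ 0) : (oneC x T b).avg 1 = x := by
  rw [avg_def, oneC_Asum, oneC_Tsum, mul_div_assoc, div_self hT, mul_one]

lemma oneC_valid (n mm : ℕ) (c : ℕ → ℝ) (F : ℕ → ℕ → ℝ) (p : ℕ → ℝ)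
    (x T : ℝ) (b : ℕ) (hx : 0 ≤ x) (hT : 0 < T) (hb : b ∈ Finset.Icc 1 n)
    (hBR : b ∈ BRp n mm c F p x) : (oneC x T b).Valid n mm c F p := by
  refine ⟨le_refl 1, ?_, ?_, ?_⟩
  · intro l hl
    exact ⟨hx, hT, hb⟩
  · intro l hl
    rw [Finset.mem_Icc, show (oneC x T b).K = 1 from rfl] at hl
    have : l = 1 := by omega
    subst this
    rw [show (oneC x T b).a 1 = b from rfl, oneC_avg x T b hT.ne']
    exact hBR
  · intro l h2 h1
    rw [show (oneC x T b).K = 1 from rfl] at h1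
    omega

noncomputable def scaleC (π : DSC) (k : ℕ) (lam : ℝ) : DSC :=
  ⟨k, π.α, fun l => lam * π.τ l, π.a⟩

lemma scaleC_Tsum (π : DSC) (k : ℕ) (lam : ℝ) (l : ℕ) :
    (scaleC π k lam).Tsum l = lam * π.Tsum l := by
  show ∑ j ∈ Finset.Icc 1 l, lam * π.τ j = lam * ∑ j ∈ Finset.Icc 1 l, π.τ j
  rw [Finset.mul_sum]

lemma scaleC_Asum (π : DSC) (k : ℕ) (lam : ℝ) (l : ℕ) :
    Asum (scaleC π k lam) l = lam * Asum π l := by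
  show ∑ j ∈ Finset.Icc 1 l, π.α j * (lam * π.τ j)
      = lam * ∑ j ∈ Finset.Icc 1 l, π.α j * π.τ j
  rw [Finset.mul_sum]
  exact Finset.sum_congr rfl fun j _ => by ring

lemma scaleC_Usum (mm : ℕ) (F : ℕ → ℕ → ℝ) (r p : ℕ → ℝ) (π : DSC) (k : ℕ) (lam : ℝ) (l : ℕ) :
    Usum mm F r p (scaleC π k lam) l = lam * Usum mm F r p π l := by
  show ∑ j ∈ Finset.Icc 1 l,
        lam * π.τ j * (expRew mm F r (π.a j) - π.α j * expPay mm F p (π.a j))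
      = lam * ∑ j ∈ Finset.Icc 1 l,
          π.τ j * (expRew mm F r (π.a j) - π.α j * expPay mm F p (π.a j))
  rw [Finset.mul_sum]
  exact Finset.sum_congr rfl fun j _ => by ring

lemma scaleC_avg (π : DSC) (k : ℕ) (lam : ℝ) (hlam : lam ≠ 0) (l : ℕ) :
    (scaleC π k lam).avg l = π.avg l := by
  rw [avg_def, avg_def, scaleC_Tsum, scaleC_Asum, mul_div_mul_left _ _ hlam]

lemma scaleC_valid (n mm : ℕ) (c : ℕ → ℝ) (F : ℕ → ℕ → ℝ) (p : ℕ → ℝ)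
    (π : DSC) (k : ℕ) (lam : ℝ) (hπ : π.Valid n mm c F p)
    (hk1 : 1 ≤ k) (hk : k ≤ π.K) (hlam : 0 < lam) : (scaleC π k lam).Valid n mm c F p := by
  have hKK : (scaleC π k lam).K = k := rfl
  refine ⟨hk1, ?_, ?_, ?_⟩
  · intro l hl
    rw [Finset.mem_Icc, hKK] at hl
    have hv := hπ.2.1 l (Finset.mem_Icc.mpr ⟨hl.1, by omega⟩)
    exact ⟨hv.1, mul_pos hlam hv.2.1, hv.2.2⟩
  · intro l hl
    rw [Finset.mem_Icc, hKK] at hl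
    rw [show (scaleC π k lam).a l = π.a l from rfl, scaleC_avg _ _ _ hlam.ne']
    exact hπ.2.2.1 l (Finset.mem_Icc.mpr ⟨hl.1, by omega⟩)
  · intro l h2 hlk
    rw [hKK] at hlk
    rw [show (scaleC π k lam).a l = π.a l from rfl, scaleC_avg _ _ _ hlam.ne']
    exact hπ.2.2.2 l h2 (by omega)

lemma main_aux (n mm : ℕ) (c : ℕ → ℝ) (F : ℕ → ℕ → ℝ) (r p : ℕ → ℝ) (β : ℕ → ℝ)
    (hβ : Breakpoints n mm c F p β) :
    ∀ N : ℕ, ∀ π : DSC, π.K ≤ N → π.Valid n mm c F p →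
      ∃ π' : DSC, π'.Valid n mm c F p ∧
        (∀ k, 1 ≤ k → k < π'.K → π'.a k ≠ π'.a (k + 1)) ∧
        (∀ k, 1 ≤ k → k + 2 ≤ π'.K → π'.a k ≠ π'.a (k + 2)) ∧
        π'.Util mm F r p ≥ π.Util mm F r p := by
  intro N
  induction N with
  | zero => intro π hK hπ; exact absurd hπ.1 (by omega)
  | succ N ih =>
    intro π hK hπ
    have hTpos : 0 < π.Tsum π.K := Tsum_pos n mm c F p π hπ π.K hπ.1 le_rfl
    have hstep : (∃ σ : DSC, σ.Valid n mm c F p ∧ σ.K ≤ N ∧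
        π.Util mm F r p ≤ σ.Util mm F r p) ∨
        ((∀ k, 1 ≤ k → k < π.K → π.a k ≠ π.a (k + 1)) ∧
         (∀ k, 1 ≤ k → k + 2 ≤ π.K → π.a k ≠ π.a (k + 2))) := by
      by_cases h1 : ∃ k, 1 ≤ k ∧ k + 1 ≤ π.K ∧ π.a k = π.a (k + 1)
      · -- merge two consecutive equal actions
        left
        obtain ⟨k, hk1, hk2, ha⟩ := h1
        have hvk := hπ.2.1 k (Finset.mem_Icc.mpr ⟨hk1, by omega⟩)
        have hvk1 := hπ.2.1 (k+1) (Finset.mem_Icc.mpr ⟨by omega, hk2⟩)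
        have hτpos : (0:ℝ) < π.τ k + π.τ (k+1) := by linarith [hvk.2.1, hvk1.2.1]
        have hρK : (mergeC π k).K = k := rfl
        have hρv : (mergeC π k).Valid n mm c F p :=
          mergeC_valid n mm c F p π k hπ hk1 hk2 ha.symm
        have hT : (mergeC π k).Tsum (mergeC π k).K = π.Tsum (k+1) := by
          rw [hρK]; exact mergeC_Tsum_top π k hk1
        have hA : Asum (mergeC π k) (mergeC π k).K = Asum π (k+1) := by
          rw [hρK]; exact mergeC_Asum_top π k hk1 hτpos.ne'
        refine ⟨splice π (mergeC π k) (k+1),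
          splice_valid n mm c F p π (mergeC π k) (k+1) (by omega) hk2 hπ hρv hT hA, ?_, ?_⟩
        · show (mergeC π k).K + (π.K - (k+1)) ≤ N
          rw [hρK]; omega
        · have hKs : (splice π (mergeC π k) (k+1)).K = k + (π.K - (k+1)) := by
            show (mergeC π k).K + (π.K - (k+1)) = _
            rw [hρK]
          have hU := splice_Usum_hi mm F r p π (mergeC π k) (k+1)
            (splice π (mergeC π k) (k+1)).K (by rw [hKs, hρK]; omega)
          have hT2 := splice_Tsum_hi π (mergeC π k) (k+1)
            (splice π (mergeC π k) (k+1)).K (by rw [hKs, hρK]; omega) hT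
          rw [hKs, hρK] at hU hT2
          have he : k + (π.K - (k+1)) - k + (k+1) = π.K := by omega
          rw [he] at hU hT2
          rw [mergeC_Usum_top mm F r p π k hk1 hτpos.ne' ha.symm] at hU
          have hUeq : Usum mm F r p (splice π (mergeC π k) (k+1))
              ((splice π (mergeC π k) (k+1)).K) = Usum mm F r p π π.K := by
            rw [hKs, hU]; ring
          rw [util_def, util_def, hUeq]
          rw [show (splice π (mergeC π k) (k+1)).Tsum ((splice π (mergeC π k) (k+1)).K)
            = π.Tsum π.K from by rw [hKs]; exact hT2]
      · by_cases h2 : ∃ k, 1 ≤ k ∧ k + 2 ≤ π.K ∧ π.a k = π.a (k + 2)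
        · left
          obtain ⟨k, hk1, hk2, ha⟩ := h2
          have hane : π.a k ≠ π.a (k + 1) := fun h => h1 ⟨k, hk1, by omega, h⟩
          have hpin : π.avg k = π.avg (k + 1) :=
            avg_pin n mm c F p β hβ π hπ k hk1 hk2 hane ha
          have hvk1 := hπ.2.1 (k+1) (Finset.mem_Icc.mpr ⟨by omega, by omega⟩)
          have hτ1 : 0 < π.τ (k+1) := hvk1.2.1
          have hTk : 0 < π.Tsum k := Tsum_pos n mm c F p π hπ k hk1 (by omega)
          have hTk1 : 0 < π.Tsum (k+1) := Tsum_pos n mm c F p π hπ (k+1) (by omega) (by omega)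
          have hTT : π.Tsum (k+1) = π.Tsum k + π.τ (k+1) :=
            Finset.sum_Icc_succ_top (by omega) π.τ
          have hAA : Asum π (k+1) = Asum π k + π.α (k+1) * π.τ (k+1) :=
            Finset.sum_Icc_succ_top (by omega) _
          have hAk : Asum π k = π.avg (k+1) * π.Tsum k := by
            rw [← hpin, avg_def]
            field_simp
          have hAk1 : Asum π (k+1) = π.avg (k+1) * π.Tsum (k+1) := by
            rw [avg_def]
            field_simp
          have hα : π.α (k+1) = π.avg (k+1) := by
            have hmul : π.α (k+1) * π.τ (k+1) = π.avg (k+1) * π.τ (k+1) := by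
              linear_combination hAk1 - hAk - hAA + π.avg (k+1) * hTT
            exact mul_right_cancel₀ hτ1.ne' hmul
          have hU1 : Usum mm F r p π (k+1) = Usum mm F r p π k
              + π.τ (k+1) * (expRew mm F r (π.a (k+1))
                - π.avg (k+1) * expPay mm F p (π.a (k+1))) := by
            have := Finset.sum_Icc_succ_top (show 1 ≤ k + 1 by omega)
              (fun j => π.τ j * (expRew mm F r (π.a j) - π.α j * expPay mm F p (π.a j)))
            rw [show Usum mm F r p π (k+1) = Usum mm F r p π k
              + π.τ (k+1) * (expRew mm F r (π.a (k+1))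
                - π.α (k+1) * expPay mm F p (π.a (k+1))) from this, hα]
          by_cases hcase : π.Tsum k * (expRew mm F r (π.a (k+1))
              - π.avg (k+1) * expPay mm F p (π.a (k+1))) ≤ Usum mm F r p π k
          · -- scaled-prefix deletion of the middle segment
            have hlam : 0 < π.Tsum (k+1) / π.Tsum k := div_pos hTk1 hTk
            have hρv : (scaleC π k (π.Tsum (k+1) / π.Tsum k)).Valid n mm c F p :=
              scaleC_valid n mm c F p π k _ hπ hk1 (by omega) hlam
            have hρK : (scaleC π k (π.Tsum (k+1) / π.Tsum k)).K = k := rfl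
            have hT : (scaleC π k (π.Tsum (k+1) / π.Tsum k)).Tsum
                ((scaleC π k (π.Tsum (k+1) / π.Tsum k)).K) = π.Tsum (k+1) := by
              rw [hρK, scaleC_Tsum]
              field_simp
            have hA : Asum (scaleC π k (π.Tsum (k+1) / π.Tsum k))
                ((scaleC π k (π.Tsum (k+1) / π.Tsum k)).K) = Asum π (k+1) := by
              rw [hρK, scaleC_Asum, hAk, hAk1]
              field_simp
            refine ⟨splice π (scaleC π k (π.Tsum (k+1) / π.Tsum k)) (k+1),
              splice_valid n mm c F p π _ (k+1) (by omega) (by omega) hπ hρv hT hA, ?_, ?_⟩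
            · show (scaleC π k (π.Tsum (k+1) / π.Tsum k)).K + (π.K - (k+1)) ≤ N
              rw [hρK]; omega
            · have hKs : (splice π (scaleC π k (π.Tsum (k+1) / π.Tsum k)) (k+1)).K
                  = k + (π.K - (k+1)) := by
                show (scaleC π k (π.Tsum (k+1) / π.Tsum k)).K + (π.K - (k+1)) = _
                rw [hρK]
              have hU := splice_Usum_hi mm F r p π (scaleC π k (π.Tsum (k+1) / π.Tsum k)) (k+1)
                (splice π (scaleC π k (π.Tsum (k+1) / π.Tsum k)) (k+1)).K
                (by rw [hKs, hρK]; omega)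
              have hT2 := splice_Tsum_hi π (scaleC π k (π.Tsum (k+1) / π.Tsum k)) (k+1)
                (splice π (scaleC π k (π.Tsum (k+1) / π.Tsum k)) (k+1)).K
                (by rw [hKs, hρK]; omega) hT
              rw [hKs, hρK] at hU hT2
              have he : k + (π.K - (k+1)) - k + (k+1) = π.K := by omega
              rw [he] at hU hT2
              rw [scaleC_Usum] at hU
              -- numerator inequality
              have h5 : π.τ (k+1) / π.Tsum k * (π.Tsum k * (expRew mm F r (π.a (k+1))
                  - π.avg (k+1) * expPay mm F p (π.a (k+1))))
                  ≤ π.τ (k+1) / π.Tsum k * Usum mm F r p π k :=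
                mul_le_mul_of_nonneg_left hcase (by positivity)
              have h6 : π.τ (k+1) / π.Tsum k * (π.Tsum k * (expRew mm F r (π.a (k+1))
                  - π.avg (k+1) * expPay mm F p (π.a (k+1))))
                  = π.τ (k+1) * (expRew mm F r (π.a (k+1))
                  - π.avg (k+1) * expPay mm F p (π.a (k+1))) := by
                field_simp
              have h7 : π.Tsum (k+1) / π.Tsum k * Usum mm F r p π k
                  = Usum mm F r p π k + π.τ (k+1) / π.Tsum k * Usum mm F r p π k := by
                rw [hTT]
                field_simp
              have hnum : Usum mm F r p π π.K ≤ Usum mm F r p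
                  (splice π (scaleC π k (π.Tsum (k+1) / π.Tsum k)) (k+1))
                  ((splice π (scaleC π k (π.Tsum (k+1) / π.Tsum k)) (k+1)).K) := by
                rw [hKs, hU]
                linarith [hU1, h5, h6, h7]
              rw [util_def, util_def]
              rw [show (splice π (scaleC π k (π.Tsum (k+1) / π.Tsum k)) (k+1)).Tsum
                ((splice π (scaleC π k (π.Tsum (k+1) / π.Tsum k)) (k+1)).K)
                = π.Tsum π.K from by rw [hKs]; exact hT2]
              exact (div_le_div_iff_of_pos_right hTpos).mpr hnum
          · -- replace the whole prefix by one segment at the pinned average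
            push_neg at hcase
            have hB0 : 0 ≤ π.avg (k+1) := avg_nonneg n mm c F p π hπ (k+1) (by omega) (by omega)
            have hρv : (oneC (π.avg (k+1)) (π.Tsum (k+1)) (π.a (k+1))).Valid n mm c F p :=
              oneC_valid n mm c F p _ _ _ hB0 hTk1 hvk1.2.2
                (hπ.2.2.1 (k+1) (Finset.mem_Icc.mpr ⟨by omega, by omega⟩))
            have hρK : (oneC (π.avg (k+1)) (π.Tsum (k+1)) (π.a (k+1))).K = 1 := rfl
            have hT : (oneC (π.avg (k+1)) (π.Tsum (k+1)) (π.a (k+1))).Tsum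
                ((oneC (π.avg (k+1)) (π.Tsum (k+1)) (π.a (k+1))).K) = π.Tsum (k+1) := by
              rw [hρK, oneC_Tsum]
            have hA : Asum (oneC (π.avg (k+1)) (π.Tsum (k+1)) (π.a (k+1)))
                ((oneC (π.avg (k+1)) (π.Tsum (k+1)) (π.a (k+1))).K) = Asum π (k+1) := by
              rw [hρK, oneC_Asum, ← hAk1]
            refine ⟨splice π (oneC (π.avg (k+1)) (π.Tsum (k+1)) (π.a (k+1))) (k+1),
              splice_valid n mm c F p π _ (k+1) (by omega) (by omega) hπ hρv hT hA, ?_, ?_⟩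
            · show (oneC (π.avg (k+1)) (π.Tsum (k+1)) (π.a (k+1))).K + (π.K - (k+1)) ≤ N
              rw [hρK]; omega
            · have hKs : (splice π (oneC (π.avg (k+1)) (π.Tsum (k+1)) (π.a (k+1))) (k+1)).K
                  = 1 + (π.K - (k+1)) := by
                show (oneC (π.avg (k+1)) (π.Tsum (k+1)) (π.a (k+1))).K + (π.K - (k+1)) = _
                rw [hρK]
              have hU := splice_Usum_hi mm F r p π
                (oneC (π.avg (k+1)) (π.Tsum (k+1)) (π.a (k+1))) (k+1)
                (splice π (oneC (π.avg (k+1)) (π.Tsum (k+1)) (π.a (k+1))) (k+1)).K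
                (by rw [hKs, hρK]; omega)
              have hT2 := splice_Tsum_hi π
                (oneC (π.avg (k+1)) (π.Tsum (k+1)) (π.a (k+1))) (k+1)
                (splice π (oneC (π.avg (k+1)) (π.Tsum (k+1)) (π.a (k+1))) (k+1)).K
                (by rw [hKs, hρK]; omega) hT
              rw [hKs, hρK] at hU hT2
              have he : 1 + (π.K - (k+1)) - 1 + (k+1) = π.K := by omega
              rw [he] at hU hT2
              rw [oneC_Usum] at hU
              have hnum : Usum mm F r p π π.K ≤ Usum mm F r p
                  (splice π (oneC (π.avg (k+1)) (π.Tsum (k+1)) (π.a (k+1))) (k+1))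
                  ((splice π (oneC (π.avg (k+1)) (π.Tsum (k+1)) (π.a (k+1))) (k+1)).K) := by
                rw [hKs, hU]
                have : π.Tsum (k+1) * (expRew mm F r (π.a (k+1))
                    - π.avg (k+1) * expPay mm F p (π.a (k+1)))
                    = π.Tsum k * (expRew mm F r (π.a (k+1))
                    - π.avg (k+1) * expPay mm F p (π.a (k+1)))
                    + π.τ (k+1) * (expRew mm F r (π.a (k+1))
                    - π.avg (k+1) * expPay mm F p (π.a (k+1))) := by
                  rw [hTT]; ring
                linarith [hU1]
              rw [util_def, util_def]
              rw [show (splice π (oneC (π.avg (k+1)) (π.Tsum (k+1)) (π.a (k+1))) (k+1)).Tsum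
                ((splice π (oneC (π.avg (k+1)) (π.Tsum (k+1)) (π.a (k+1))) (k+1)).K)
                = π.Tsum π.K from by rw [hKs]; exact hT2]
              exact (div_le_div_iff_of_pos_right hTpos).mpr hnum
        · right
          constructor
          · intro k hk hlt h
            exact h1 ⟨k, hk, by omega, h⟩
          · intro k hk hle h
            exact h2 ⟨k, hk, hle, h⟩
    rcases hstep with ⟨σ, hσv, hσK, hle⟩ | ⟨hc1, hc2⟩
    · obtain ⟨π', hv', h1', h2', h3'⟩ := ih σ hσK hσv
      exact ⟨π', hv', h1', h2', le_trans hle h3'⟩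
    · exact ⟨π, hπ, hc1, hc2, le_refl _⟩

end NRRaux

/-- Every valid `p`-scaled dynamic contract can be rewritten,
without losing principal utility, so that consecutive actions differ and no
action returns after one intermediate segment. -/
theorem no_return_rewriting (n m : ℕ) (c : ℕ → ℝ) (F : ℕ → ℕ → ℝ)
    (r : ℕ → ℝ) (p : ℕ → ℝ) (β : ℕ → ℝ)
    (hInst : PInstance n m c F r p) (hβ : Breakpoints n m c F p β)
    (π : DSC) (hπ : π.Valid n m c F p) :
    ∃ π' : DSC, π'.Valid n m c F p ∧
      (∀ k, 1 ≤ k → k < π'.K → π'.a k ≠ π'.a (k + 1)) ∧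
      (∀ k, 1 ≤ k → k + 2 ≤ π'.K → π'.a k ≠ π'.a (k + 2)) ∧
      π'.Util m F r p ≥ π.Util m F r p := by
  exact NRRaux.main_aux n m c F r p β hβ π.K π le_rfl hπ
end

section
/- Let π = ((α^1, τ^1, a^1), …, (α^K, τ^K, a^K)) be a valid p-scaled dynamic contract whose actions are consecutively increasing, i.e., a^{k+1} = a^k + 1 for every 1 ≤ k ≤ K−1. Then there exists a static p-scaled contract, i.e., a valid single-segment p-scaled dynamic contract π′ = ((α′, τ′, a′)), with Util(π′) ≥ Util(π). -/
open Finset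

/-- A valid `p`-scaled dynamic contract with consecutively
increasing actions is dominated by a static (single-segment) `p`-scaled contract. -/
theorem increasing_dominated_by_static (n m : ℕ) (c : ℕ → ℝ) (F : ℕ → ℕ → ℝ)
    (r : ℕ → ℝ) (p : ℕ → ℝ) (β : ℕ → ℝ)
    (hInst : PInstance n m c F r p) (hβ : Breakpoints n m c F p β)
    (π : DSC) (hπ : π.Valid n m c F p)
    (hinc : ∀ k, 1 ≤ k → k < π.K → π.a (k + 1) = π.a k + 1) :
    ∃ π' : DSC, π'.Valid n m c F p ∧ π'.K = 1 ∧
      π'.Util m F r p ≥ π.Util m F r p := by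
  obtain ⟨hn2, hc, hr, hF, hp⟩ := hInst
  obtain ⟨hβ0, hβmono, hβ1, hchar⟩ := hβ
  obtain ⟨hK1, hseg, hBR, hBR2⟩ := hπ
  -- basic positivity facts
  have hτpos : ∀ k, 1 ≤ k → k ≤ π.K → 0 < π.τ k := fun k h1 h2 =>
    (hseg k (Finset.mem_Icc.2 ⟨h1, h2⟩)).2.1
  have hαnn : ∀ k, 1 ≤ k → k ≤ π.K → 0 ≤ π.α k := fun k h1 h2 =>
    (hseg k (Finset.mem_Icc.2 ⟨h1, h2⟩)).1
  have hTnn : ∀ k, k ≤ π.K → 0 ≤ π.Tsum k := by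
    intro k hk
    apply Finset.sum_nonneg
    intro j hj
    obtain ⟨hj1, hj2⟩ := Finset.mem_Icc.1 hj
    exact (hτpos j hj1 (hj2.trans hk)).le
  have hTpos : ∀ k, 1 ≤ k → k ≤ π.K → 0 < π.Tsum k := by
    intro k h1 h2
    apply Finset.sum_pos
    · intro j hj
      obtain ⟨hj1, hj2⟩ := Finset.mem_Icc.1 hj
      exact hτpos j hj1 (hj2.trans h2)
    · exact ⟨1, Finset.mem_Icc.2 ⟨le_refl 1, h1⟩⟩
  have hAnn : ∀ k, k ≤ π.K → 0 ≤ π.avg k := by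
    intro k hk
    apply div_nonneg
    · apply Finset.sum_nonneg
      intro j hj
      obtain ⟨hj1, hj2⟩ := Finset.mem_Icc.1 hj
      exact mul_nonneg (hαnn j hj1 (hj2.trans hk)) (hτpos j hj1 (hj2.trans hk)).le
    · exact hTnn k hk
  -- S^k = ᾱ^k T^k
  have hS : ∀ k, k ≤ π.K → (∑ j ∈ Finset.Icc 1 k, π.α j * π.τ j) = π.avg k * π.Tsum k := by
    intro k hk
    rcases Nat.eq_zero_or_pos k with h0 | h1
    · subst h0; simp [DSC.avg, DSC.Tsum]
    · rw [DSC.avg, div_mul_cancel₀]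
      exact (hTpos k h1 hk).ne'
  -- Abel-type identity
  have hstep : ∀ k, k + 1 ≤ π.K →
      π.τ (k + 1) * (π.α (k + 1) - π.avg (k + 1)) =
        π.Tsum k * (π.avg (k + 1) - π.avg k) := by
    intro k hk
    have e1 : π.avg (k + 1) * π.Tsum (k + 1) =
        π.avg k * π.Tsum k + π.α (k + 1) * π.τ (k + 1) := by
      rw [← hS k (Nat.le_of_succ_le hk), ← hS (k + 1) hk]
      exact Finset.sum_Icc_succ_top (Nat.one_le_iff_ne_zero.2 (Nat.succ_ne_zero k)) _
    have e2 : π.Tsum (k + 1) = π.Tsum k + π.τ (k + 1) :=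
      Finset.sum_Icc_succ_top (Nat.one_le_iff_ne_zero.2 (Nat.succ_ne_zero k)) _
    linear_combination (-1 : ℝ) * e1 + π.avg (k + 1) * e2
  -- expected payments are nonnegative
  have hPnn : ∀ i, i ∈ Finset.Icc 1 n → 0 ≤ expPay m F p i := by
    intro i hi
    apply Finset.sum_nonneg
    intro j hj
    exact mul_nonneg ((hF i hi).1 j hj) (hp j hj)
  -- monotonicity of running averages
  have hmono : ∀ k, 1 ≤ k → k + 1 ≤ π.K → π.avg k ≤ π.avg (k + 1) := by
    intro k h1 h2
    have hkK : k ≤ π.K := Nat.le_of_succ_le h2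
    have hak : π.a k ∈ Finset.Icc 1 n := (hseg k (Finset.mem_Icc.2 ⟨h1, hkK⟩)).2.2
    have hak1 : π.a (k + 1) ∈ Finset.Icc 1 n :=
      (hseg (k + 1) (Finset.mem_Icc.2 ⟨Nat.le_add_left 1 k, h2⟩)).2.2
    obtain ⟨ha1, han⟩ := Finset.mem_Icc.1 hak
    obtain ⟨ha1', han'⟩ := Finset.mem_Icc.1 hak1
    have hsucc : π.a (k + 1) = π.a k + 1 := hinc k h1 (Nat.lt_of_succ_le h2)
    have haklt : π.a k < n := by omega
    -- ᾱ^k ≤ β_{a^k}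
    have h1' : π.avg k ≤ β (π.a k) := by
      have := (hchar (π.avg k) (hAnn k hkK) (π.a k) ha1 han).1
        (hBR k (Finset.mem_Icc.2 ⟨h1, hkK⟩))
      exact this.2 haklt
    -- β_{a^k} ≤ ᾱ^{k+1}
    have h2' : β (π.a k) ≤ π.avg (k + 1) := by
      have := (hchar (π.avg (k + 1)) (hAnn (k + 1) h2) (π.a (k + 1)) ha1' han').1
        (hBR (k + 1) (Finset.mem_Icc.2 ⟨Nat.le_add_left 1 k, h2⟩))
      have h3 := this.1
      rwa [hsucc, Nat.add_sub_cancel] at h3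
    linarith
  -- termwise payment comparison
  have key : ∀ k ∈ Finset.Icc 1 π.K,
      π.τ k * (expRew m F r (π.a k) - π.α k * expPay m F p (π.a k)) ≤
        π.τ k * (expRew m F r (π.a k) - π.avg k * expPay m F p (π.a k)) := by
    intro k hk
    obtain ⟨hk1, hkK⟩ := Finset.mem_Icc.1 hk
    obtain ⟨j, rfl⟩ : ∃ j, k = j + 1 := ⟨k - 1, by omega⟩
    have hd : π.avg j ≤ π.avg (j + 1) := by
      rcases Nat.eq_zero_or_pos j with h0 | hj1
    -- j = 0 : avg 0 = 0
      · subst h0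
        simpa [DSC.avg, DSC.Tsum] using hAnn 1 hkK
      · exact hmono j hj1 hkK
    have hTj : 0 ≤ π.Tsum j := hTnn j (Nat.le_of_succ_le hkK)
    have hstep' := hstep j hkK
    have hP : 0 ≤ expPay m F p (π.a (j + 1)) :=
      hPnn _ ((hseg (j + 1) hk).2.2)
    have hnn : 0 ≤ π.τ (j + 1) * (π.α (j + 1) - π.avg (j + 1)) := by
      rw [hstep']
      exact mul_nonneg hTj (by linarith)
    nlinarith [hnn, hP]
  -- pick the best static index
  set u : ℕ → ℝ := fun k => expRew m F r (π.a k) - π.avg k * expPay m F p (π.a k) with hu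
  obtain ⟨ks, hksmem, hksmax⟩ := Finset.exists_max_image (Finset.Icc 1 π.K) u
    ⟨1, Finset.mem_Icc.2 ⟨le_refl 1, hK1⟩⟩
  refine ⟨⟨1, fun _ => π.avg ks, fun _ => 1, fun _ => π.a ks⟩, ?_, rfl, ?_⟩
  · obtain ⟨hks1, hksK⟩ := Finset.mem_Icc.1 hksmem
    refine ⟨le_refl 1, ?_, ?_, ?_⟩
    · intro k hk
      obtain ⟨h1, h2⟩ := Finset.mem_Icc.1 hk
      have h2' : k ≤ 1 := h2
      have : k = 1 := by omega
      subst this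
      exact ⟨hAnn ks hksK, one_pos, (hseg ks hksmem).2.2⟩
    · intro k hk
      obtain ⟨h1, h2⟩ := Finset.mem_Icc.1 hk
      have h2' : k ≤ 1 := h2
      have : k = 1 := by omega
      subst this
      have havg : DSC.avg ⟨1, fun _ => π.avg ks, fun _ => 1, fun _ => π.a ks⟩ 1
          = π.avg ks := by
        simp [DSC.avg, DSC.Tsum]
      rw [havg]
      exact hBR ks hksmem
    · intro k h2 h1
      have h1' : k ≤ 1 := h1
      omega
  · -- utility comparison
    have hUtil' : DSC.Util m F r p ⟨1, fun _ => π.avg ks, fun _ => 1, fun _ => π.a ks⟩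
        = u ks := by
      simp [DSC.Util, DSC.Tsum, hu]
    rw [hUtil', ge_iff_le, DSC.Util, div_le_iff₀ (hTpos π.K hK1 le_rfl)]
    calc ∑ k ∈ Finset.Icc 1 π.K,
          π.τ k * (expRew m F r (π.a k) - π.α k * expPay m F p (π.a k))
        ≤ ∑ k ∈ Finset.Icc 1 π.K, π.τ k * u k := Finset.sum_le_sum key
      _ ≤ ∑ k ∈ Finset.Icc 1 π.K, π.τ k * u ks := by
          apply Finset.sum_le_sum
          intro k hk
          obtain ⟨h1, h2⟩ := Finset.mem_Icc.1 hk
          exact mul_le_mul_of_nonneg_left (hksmax k hk) (hτpos k h1 h2).le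
      _ = u ks * π.Tsum π.K := by
          rw [DSC.Tsum, Finset.mul_sum]
          exact Finset.sum_congr rfl fun k _ => mul_comm _ _
end

section
/- Let π = ((α^1, τ^1, a^1), …, (α^K, τ^K, a^K)) be a valid p-scaled dynamic contract whose actions are consecutively decreasing, i.e., a^{k+1} = a^k − 1 for every 1 ≤ k ≤ K−1. Then there exists a valid free-fall p-scaled dynamic contract π′ with Util(π′) ≥ Util(π). -/
open Finset

section Helpers

private lemma abelSum (f g : ℕ → ℝ) (hf : f 0 = 0) (M : ℕ) :
    ∑ k ∈ Finset.Icc 1 M, (f k - f (k - 1)) * g k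
      = f M * g M + ∑ k ∈ Finset.Icc 1 (M - 1), f k * (g k - g (k + 1)) := by
  induction M with
  | zero => simp [hf]
  | succ M ih =>
    rw [Finset.sum_Icc_succ_top (by omega : 1 ≤ M + 1), ih]
    simp only [Nat.add_sub_cancel]
    cases M with
    | zero => simp [hf]
    | succ N =>
      rw [Finset.sum_Icc_succ_top (by omega : (1:ℕ) ≤ N + 1)]
      simp only [Nat.add_sub_cancel]
      ring

private lemma teleSum (f : ℕ → ℝ) (hf : f 0 = 0) (M : ℕ) :
    ∑ k ∈ Finset.Icc 1 M, (f k - f (k - 1)) = f M := by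
  have h := abelSum f (fun _ => 1) hf M
  simpa using h

private lemma shiftSum (f : ℕ → ℝ) (k0 : ℕ) (hk0 : 1 ≤ k0) (M : ℕ) :
    ∑ j ∈ Finset.Icc 1 M, f (k0 + j - 1) = ∑ k ∈ Finset.Icc k0 (k0 + M - 1), f k := by
  induction M with
  | zero =>
    rw [show k0 + 0 - 1 = k0 - 1 by omega]
    simp [Finset.Icc_eq_empty (by omega : ¬ k0 ≤ k0 - 1)]
  | succ M ih =>
    rw [Finset.sum_Icc_succ_top (by omega : 1 ≤ M + 1), ih,
      show k0 + (M + 1) - 1 = (k0 + M - 1) + 1 by omega,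
      Finset.sum_Icc_succ_top (by omega : k0 ≤ k0 + M - 1 + 1)]

private lemma Tsum_pos {n m : ℕ} {c : ℕ → ℝ} {F : ℕ → ℕ → ℝ} {p : ℕ → ℝ}
    {π : DSC} (hv : π.Valid n m c F p) {k : ℕ} (h1 : 1 ≤ k) (h2 : k ≤ π.K) :
    0 < π.Tsum k := by
  apply Finset.sum_pos
  · intro i hi
    rw [Finset.mem_Icc] at hi
    exact (hv.2.1 i (Finset.mem_Icc.mpr ⟨hi.1, hi.2.trans h2⟩)).2.1
  · exact Finset.nonempty_Icc.mpr h1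

private lemma tsum_step (π : DSC) (k : ℕ) (h1 : 1 ≤ k) :
    π.Tsum k = π.Tsum (k - 1) + π.τ k := by
  obtain ⟨k', rfl⟩ : ∃ k', k = k' + 1 := ⟨k - 1, by omega⟩
  rw [DSC.Tsum, DSC.Tsum, Finset.sum_Icc_succ_top (by omega : 1 ≤ k' + 1)]
  simp

private lemma asum_step (π : DSC) (k : ℕ) (h1 : 1 ≤ k) :
    ∑ j ∈ Finset.Icc 1 k, π.α j * π.τ j
      = (∑ j ∈ Finset.Icc 1 (k - 1), π.α j * π.τ j) + π.α k * π.τ k := by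
  obtain ⟨k', rfl⟩ : ∃ k', k = k' + 1 := ⟨k - 1, by omega⟩
  rw [Finset.sum_Icc_succ_top (by omega : 1 ≤ k' + 1)]
  simp

private lemma tieLem {n m : ℕ} {c : ℕ → ℝ} {F : ℕ → ℕ → ℝ} {p : ℕ → ℝ}
    {π : DSC} (hv : π.Valid n m c F p) {k : ℕ} (hk1 : 1 ≤ k) (hkK : k < π.K) :
    π.avg k * expPay m F p (π.a k) - c (π.a k)
      = π.avg k * expPay m F p (π.a (k + 1)) - c (π.a (k + 1)) := by
  obtain ⟨hK, hseg, h3, h4⟩ := hv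
  have hkmem : k ∈ Finset.Icc 1 π.K := Finset.mem_Icc.mpr ⟨hk1, by omega⟩
  have hk' : k + 1 ∈ Finset.Icc 1 π.K := Finset.mem_Icc.mpr ⟨by omega, by omega⟩
  have ha1 := (hseg k hkmem).2.2
  have ha2 := (hseg (k + 1) hk').2.2
  have hb1 := h3 k hkmem
  have hb2 := h4 (k + 1) (by omega) (by omega)
  simp only [BRp, Set.mem_setOf_eq, Nat.add_sub_cancel] at hb1 hb2
  exact le_antisymm (hb2.2 (π.a k) ha1) (hb1.2 (π.a (k + 1)) ha2)

private lemma lemA {n m : ℕ} {c : ℕ → ℝ} {F : ℕ → ℕ → ℝ} (r : ℕ → ℝ) {p : ℕ → ℝ}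
    {π : DSC} (hv : π.Valid n m c F p) :
    ∑ k ∈ Finset.Icc 1 π.K, π.τ k * (expRew m F r (π.a k) - π.α k * expPay m F p (π.a k))
      = π.Tsum π.K * expRew m F r (π.a π.K)
        - (∑ j ∈ Finset.Icc 1 π.K, π.α j * π.τ j) * expPay m F p (π.a π.K)
        + ∑ k ∈ Finset.Icc 1 (π.K - 1),
            π.Tsum k * ((expRew m F r (π.a k) - c (π.a k))
              - (expRew m F r (π.a (k + 1)) - c (π.a (k + 1)))) := by
  have hT0 : π.Tsum 0 = 0 := by simp [DSC.Tsum]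
  have hA0 : ∑ j ∈ Finset.Icc 1 0, π.α j * π.τ j = 0 := by simp
  have step : ∀ k ∈ Finset.Icc 1 π.K,
      π.τ k * (expRew m F r (π.a k) - π.α k * expPay m F p (π.a k))
        = (π.Tsum k - π.Tsum (k - 1)) * expRew m F r (π.a k)
          - ((∑ j ∈ Finset.Icc 1 k, π.α j * π.τ j)
              - ∑ j ∈ Finset.Icc 1 (k - 1), π.α j * π.τ j) * expPay m F p (π.a k) := by
    intro k hk
    rw [Finset.mem_Icc] at hk
    have e1 : π.Tsum k - π.Tsum (k - 1) = π.τ k := by rw [tsum_step π k hk.1]; ring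
    have e2 : (∑ j ∈ Finset.Icc 1 k, π.α j * π.τ j)
        - ∑ j ∈ Finset.Icc 1 (k - 1), π.α j * π.τ j = π.α k * π.τ k := by
      rw [asum_step π k hk.1]; ring
    rw [e1, e2]; ring
  rw [Finset.sum_congr rfl step, Finset.sum_sub_distrib]
  have hAbel1 := abelSum π.Tsum (fun k => expRew m F r (π.a k)) hT0 π.K
  have hAbel2 := abelSum (fun k => ∑ j ∈ Finset.Icc 1 k, π.α j * π.τ j)
      (fun k => expPay m F p (π.a k)) hA0 π.K
  rw [hAbel1, hAbel2]
  have pay_step : ∀ k ∈ Finset.Icc 1 (π.K - 1),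
      (∑ j ∈ Finset.Icc 1 k, π.α j * π.τ j)
          * (expPay m F p (π.a k) - expPay m F p (π.a (k + 1)))
        = π.Tsum k * (c (π.a k) - c (π.a (k + 1))) := by
    intro k hk
    rw [Finset.mem_Icc] at hk
    have hk2 : k < π.K := by omega
    have hTpos := Tsum_pos hv hk.1 (le_of_lt hk2)
    have hAv : (∑ j ∈ Finset.Icc 1 k, π.α j * π.τ j) = π.avg k * π.Tsum k := by
      rw [DSC.avg, div_mul_cancel₀ _ hTpos.ne']
    have htie := tieLem hv hk.1 hk2
    rw [hAv]
    have : π.avg k * (expPay m F p (π.a k) - expPay m F p (π.a (k + 1)))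
        = c (π.a k) - c (π.a (k + 1)) := by linarith
    calc π.avg k * π.Tsum k * (expPay m F p (π.a k) - expPay m F p (π.a (k + 1)))
        = π.Tsum k * (π.avg k * (expPay m F p (π.a k) - expPay m F p (π.a (k + 1)))) := by ring
      _ = π.Tsum k * (c (π.a k) - c (π.a (k + 1))) := by rw [this]
  rw [Finset.sum_congr rfl pay_step]
  have combine : ∑ k ∈ Finset.Icc 1 (π.K - 1),
      π.Tsum k * ((expRew m F r (π.a k) - c (π.a k))
        - (expRew m F r (π.a (k + 1)) - c (π.a (k + 1))))
      = (∑ k ∈ Finset.Icc 1 (π.K - 1),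
          π.Tsum k * (expRew m F r (π.a k) - expRew m F r (π.a (k + 1))))
        - ∑ k ∈ Finset.Icc 1 (π.K - 1), π.Tsum k * (c (π.a k) - c (π.a (k + 1))) := by
    rw [← Finset.sum_sub_distrib]
    apply Finset.sum_congr rfl
    intros; ring
  rw [combine]; ring

end Helpers

section SFFdef

/-- Suffix free-fall contract: segments `k0, …, L` of `π`, replayed as a free-fall
contract whose running averages match those of `π`. -/
private noncomputable def SFF (π : DSC) (k0 L : ℕ) : DSC where
  K := L - k0 + 1
  α := fun j => if j = 1 then π.avg k0 else 0
  τ := fun j => if j = 1 then 1 / π.avg k0 else 1 / π.avg (k0 + j - 1) - 1 / π.avg (k0 + j - 2)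
  a := fun j => π.a (k0 + j - 1)

private lemma SFF_K (π : DSC) (k0 L : ℕ) : (SFF π k0 L).K = L - k0 + 1 := rfl

private lemma SFF_a (π : DSC) (k0 L j : ℕ) : (SFF π k0 L).a j = π.a (k0 + j - 1) := rfl

private lemma SFF_α1 (π : DSC) (k0 L : ℕ) : (SFF π k0 L).α 1 = π.avg k0 := by simp [SFF]

private lemma SFF_αj (π : DSC) (k0 L j : ℕ) (hj : 2 ≤ j) : (SFF π k0 L).α j = 0 := by
  simp [SFF, show j ≠ 1 by omega]

private lemma SFF_τ1 (π : DSC) (k0 L : ℕ) : (SFF π k0 L).τ 1 = 1 / π.avg k0 := by simp [SFF]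

private lemma SFF_τj (π : DSC) (k0 L j : ℕ) (hj : 2 ≤ j) :
    (SFF π k0 L).τ j = 1 / π.avg (k0 + j - 1) - 1 / π.avg (k0 + j - 2) := by
  simp [SFF, show j ≠ 1 by omega]

private lemma SFF_freefall (π : DSC) (k0 L : ℕ) : (SFF π k0 L).FreeFall :=
  fun k h2 _ => SFF_αj π k0 L k h2

private lemma SFF_Tsum (π : DSC) (k0 L : ℕ) (hk0 : 1 ≤ k0) :
    ∀ j, 1 ≤ j → (SFF π k0 L).Tsum j = 1 / π.avg (k0 + j - 1) := by
  intro j hj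
  induction j with
  | zero => omega
  | succ j ih =>
    rcases Nat.eq_zero_or_pos j with hj0 | hj0
    · subst hj0
      rw [DSC.Tsum, Finset.Icc_self, Finset.sum_singleton, SFF_τ1,
        show k0 + 1 - 1 = k0 by omega]
    · rw [DSC.Tsum, Finset.sum_Icc_succ_top (by omega : 1 ≤ j + 1)]
      have iht := ih hj0
      rw [DSC.Tsum] at iht
      rw [iht, SFF_τj π k0 L (j + 1) (by omega),
        show k0 + (j + 1) - 2 = k0 + j - 1 by omega]
      ring

private lemma SFF_Asum (π : DSC) (k0 L : ℕ) (h0 : π.avg k0 ≠ 0) :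
    ∀ j, 1 ≤ j → ∑ i ∈ Finset.Icc 1 j, (SFF π k0 L).α i * (SFF π k0 L).τ i = 1 := by
  intro j hj
  induction j with
  | zero => omega
  | succ j ih =>
    rcases Nat.eq_zero_or_pos j with hj0 | hj0
    · subst hj0
      rw [Finset.Icc_self, Finset.sum_singleton, SFF_α1, SFF_τ1, mul_one_div_cancel h0]
    · rw [Finset.sum_Icc_succ_top (by omega : 1 ≤ j + 1), ih hj0,
        SFF_αj π k0 L (j + 1) (by omega), zero_mul, add_zero]

private lemma SFF_avg (π : DSC) (k0 L : ℕ) (hk0 : 1 ≤ k0) (h0 : π.avg k0 ≠ 0) :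
    ∀ j, 1 ≤ j → (SFF π k0 L).avg j = π.avg (k0 + j - 1) := by
  intro j hj
  rw [DSC.avg, SFF_Asum π k0 L h0 j hj, SFF_Tsum π k0 L hk0 j hj, one_div_one_div]

end SFFdef

section SFFvalid

private lemma SFF_valid {n m : ℕ} {c : ℕ → ℝ} {F : ℕ → ℕ → ℝ} {p : ℕ → ℝ}
    {π : DSC} (hv : π.Valid n m c F p) {k0 L : ℕ}
    (hk0 : 1 ≤ k0) (hkL : k0 ≤ L) (hL : L ≤ π.K)
    (hmono : ∀ k, k0 ≤ k → k < L → π.avg (k + 1) < π.avg k)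
    (hpos : ∀ k, k0 ≤ k → k ≤ L → 0 < π.avg k) :
    (SFF π k0 L).Valid n m c F p := by
  have h0 : π.avg k0 ≠ 0 := (hpos k0 le_rfl hkL).ne'
  obtain ⟨hK, hseg, h3, h4⟩ := hv
  refine ⟨by rw [SFF_K]; omega, ?_, ?_, ?_⟩
  · intro j hj
    rw [SFF_K] at hj
    rw [Finset.mem_Icc] at hj
    have hidx : k0 ≤ k0 + j - 1 ∧ k0 + j - 1 ≤ L := by omega
    refine ⟨?_, ?_, ?_⟩
    · rcases Nat.eq_or_lt_of_le hj.1 with h1 | h1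
      · rw [← h1, SFF_α1]
        exact (hpos k0 le_rfl hkL).le
      · rw [SFF_αj π k0 L j (by omega)]
    · rcases Nat.eq_or_lt_of_le hj.1 with h1 | h1
      · rw [← h1, SFF_τ1]
        exact one_div_pos.mpr (hpos k0 le_rfl hkL)
      · rw [SFF_τj π k0 L j (by omega)]
        have e1 : k0 + j - 1 = (k0 + j - 2) + 1 := by omega
        have hlt : π.avg (k0 + j - 1) < π.avg (k0 + j - 2) := by
          rw [e1]; exact hmono _ (by omega) (by omega)
        have hp1 : 0 < π.avg (k0 + j - 1) := hpos _ (by omega) (by omega)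
        exact sub_pos.mpr (one_div_lt_one_div_of_lt hp1 hlt)
    · rw [SFF_a]
      exact (hseg (k0 + j - 1) (Finset.mem_Icc.mpr ⟨by omega, by omega⟩)).2.2
  · intro j hj
    rw [SFF_K] at hj
    rw [Finset.mem_Icc] at hj
    rw [SFF_a, SFF_avg π k0 L hk0 h0 j hj.1]
    exact h3 (k0 + j - 1) (Finset.mem_Icc.mpr ⟨by omega, by omega⟩)
  · intro j hj2 hjK
    rw [SFF_K] at hjK
    rw [SFF_a, SFF_avg π k0 L hk0 h0 (j - 1) (by omega)]
    have e1 : k0 + (j - 1) - 1 = (k0 + j - 1) - 1 := by omega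
    rw [e1]
    exact h4 (k0 + j - 1) (by omega) (by omega)

private lemma SFF_util {n m : ℕ} {c : ℕ → ℝ} {F : ℕ → ℕ → ℝ} (r : ℕ → ℝ) {p : ℕ → ℝ}
    {π : DSC} (hv : π.Valid n m c F p) {k0 L : ℕ}
    (hk0 : 1 ≤ k0) (hkL : k0 ≤ L) (hL : L ≤ π.K)
    (hmono : ∀ k, k0 ≤ k → k < L → π.avg (k + 1) < π.avg k)
    (hpos : ∀ k, k0 ≤ k → k ≤ L → 0 < π.avg k) :
    (SFF π k0 L).Util m F r p
      = expRew m F r (π.a L) - π.avg L * expPay m F p (π.a L)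
        + π.avg L * ∑ k ∈ Finset.Icc k0 (L - 1),
            (1 / π.avg k) * ((expRew m F r (π.a k) - c (π.a k))
              - (expRew m F r (π.a (k + 1)) - c (π.a (k + 1)))) := by
  have h0 : π.avg k0 ≠ 0 := (hpos k0 le_rfl hkL).ne'
  have hvf := SFF_valid hv hk0 hkL hL hmono hpos
  have hKL : (SFF π k0 L).K = L - k0 + 1 := rfl
  have hLidx : k0 + (SFF π k0 L).K - 1 = L := by rw [hKL]; omega
  rw [DSC.Util, lemA r hvf]
  rw [SFF_Asum π k0 L h0 (SFF π k0 L).K (by rw [hKL]; omega),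
    SFF_Tsum π k0 L hk0 (SFF π k0 L).K (by rw [hKL]; omega), SFF_a, hLidx]
  -- middle sum
  have hmid : ∑ k ∈ Finset.Icc 1 ((SFF π k0 L).K - 1),
      (SFF π k0 L).Tsum k * ((expRew m F r ((SFF π k0 L).a k) - c ((SFF π k0 L).a k))
        - (expRew m F r ((SFF π k0 L).a (k + 1)) - c ((SFF π k0 L).a (k + 1))))
      = ∑ k ∈ Finset.Icc k0 (L - 1),
          (1 / π.avg k) * ((expRew m F r (π.a k) - c (π.a k))
            - (expRew m F r (π.a (k + 1)) - c (π.a (k + 1)))) := by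
    have e1 : ∀ j ∈ Finset.Icc 1 ((SFF π k0 L).K - 1),
        (SFF π k0 L).Tsum j * ((expRew m F r ((SFF π k0 L).a j) - c ((SFF π k0 L).a j))
          - (expRew m F r ((SFF π k0 L).a (j + 1)) - c ((SFF π k0 L).a (j + 1))))
        = (1 / π.avg (k0 + j - 1)) * ((expRew m F r (π.a (k0 + j - 1)) - c (π.a (k0 + j - 1)))
            - (expRew m F r (π.a ((k0 + j - 1) + 1)) - c (π.a ((k0 + j - 1) + 1)))) := by
      intro j hj
      rw [hKL] at hj
      rw [Finset.mem_Icc] at hj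
      rw [SFF_Tsum π k0 L hk0 j hj.1, SFF_a, SFF_a,
        show k0 + (j + 1) - 1 = (k0 + j - 1) + 1 by omega]
    rw [Finset.sum_congr rfl e1,
      shiftSum (fun k => (1 / π.avg k) * ((expRew m F r (π.a k) - c (π.a k))
        - (expRew m F r (π.a (k + 1)) - c (π.a (k + 1))))) k0 hk0 ((SFF π k0 L).K - 1),
      show k0 + ((SFF π k0 L).K - 1) - 1 = L - 1 by rw [hKL]; omega]
  rw [hmid]
  have hL0 : π.avg L ≠ 0 := (hpos L hkL le_rfl).ne'
  field_simp
end SFFvalid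

private lemma sumBound (M : ℕ) (A g : ℕ → ℝ) (AK S0 : ℝ)
    (hA0 : A 0 = 0)
    (hstepA : ∀ k, 1 ≤ k → k ≤ M → A (k - 1) ≤ A k)
    (hAM : A M ≤ AK)
    (hS0 : ∀ k, 1 ≤ k → k ≤ M + 1 → ∑ j ∈ Finset.Icc k M, g j ≤ S0)
    (hS0nn : 0 ≤ S0) :
    ∑ k ∈ Finset.Icc 1 M, A k * g k ≤ AK * S0 := by
  have hSSstep : ∀ k, 1 ≤ k → k ≤ M → (∑ j ∈ Finset.Icc k M, g j)
      = g k + ∑ j ∈ Finset.Icc (k + 1) M, g j := by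
    intro k h1 h2
    rw [← Finset.Ioc_insert_left h2, Finset.sum_insert (by simp), ← Finset.Icc_add_one_left_eq_Ioc]
  have hc2 : ∑ k ∈ Finset.Icc 1 M, A k * g k
      = ∑ k ∈ Finset.Icc 1 M, (A k - A (k - 1)) * ∑ j ∈ Finset.Icc k M, g j := by
    cases M with
    | zero => simp
    | succ M' =>
      have hAbel := abelSum A (fun k => ∑ j ∈ Finset.Icc k (M' + 1), g j) hA0 (M' + 1)
      rw [hAbel, Nat.add_sub_cancel]
      have e3 : ∀ k ∈ Finset.Icc 1 M', A k * ((∑ j ∈ Finset.Icc k (M' + 1), g j)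
          - ∑ j ∈ Finset.Icc (k + 1) (M' + 1), g j) = A k * g k := by
        intro k hk
        rw [Finset.mem_Icc] at hk
        rw [hSSstep k hk.1 (by omega)]
        ring
      rw [Finset.sum_congr rfl e3]
      have e4 : ∑ j ∈ Finset.Icc (M' + 1) (M' + 1), g j = g (M' + 1) := by
        rw [Finset.Icc_self, Finset.sum_singleton]
      rw [e4, Finset.sum_Icc_succ_top (by omega : 1 ≤ M' + 1) (fun k => A k * g k)]
      ring
  rw [hc2]
  calc ∑ k ∈ Finset.Icc 1 M, (A k - A (k - 1)) * ∑ j ∈ Finset.Icc k M, g j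
      ≤ ∑ k ∈ Finset.Icc 1 M, (A k - A (k - 1)) * S0 := by
        apply Finset.sum_le_sum
        intro k hk
        rw [Finset.mem_Icc] at hk
        exact mul_le_mul_of_nonneg_left (hS0 k hk.1 (by omega)) (by
          have := hstepA k hk.1 hk.2; linarith)
    _ = (∑ k ∈ Finset.Icc 1 M, (A k - A (k - 1))) * S0 := by rw [Finset.sum_mul]
    _ = A M * S0 := by rw [teleSum A hA0 M]
    _ ≤ AK * S0 := mul_le_mul_of_nonneg_right hAM hS0nn

/-- A valid `p`-scaled dynamic contract with consecutively
decreasing actions is dominated by a valid free-fall `p`-scaled contract. -/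
theorem decreasing_dominated_by_free_fall (n m : ℕ) (c : ℕ → ℝ) (F : ℕ → ℕ → ℝ)
    (r : ℕ → ℝ) (p : ℕ → ℝ) (β : ℕ → ℝ)
    (hInst : PInstance n m c F r p) (hβ : Breakpoints n m c F p β)
    (π : DSC) (hπ : π.Valid n m c F p)
    (hdec : ∀ k, 1 ≤ k → k < π.K → (π.a (k + 1) : ℤ) = (π.a k : ℤ) - 1) :
    ∃ π' : DSC, π'.Valid n m c F p ∧ π'.FreeFall ∧
      π'.Util m F r p ≥ π.Util m F r p := by
  rcases Nat.lt_or_ge π.K 2 with hKlt | hK2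
  · refine ⟨π, hπ, ?_, le_refl _⟩
    intro k h2 hk
    exfalso
    have := hπ.1
    omega
  obtain ⟨hβ0, hβinc, hβ1pos, hBR⟩ := hβ
  obtain ⟨hKv, hseg, hbr3, hbr4⟩ := id hπ
  have halb : ∀ k, 1 ≤ k → k ≤ π.K → 1 ≤ π.a k := by
    intro k h1 h2
    exact (Finset.mem_Icc.mp (hseg k (Finset.mem_Icc.mpr ⟨h1, h2⟩)).2.2).1
  have haub : ∀ k, 1 ≤ k → k ≤ π.K → π.a k ≤ n := by
    intro k h1 h2
    exact (Finset.mem_Icc.mp (hseg k (Finset.mem_Icc.mpr ⟨h1, h2⟩)).2.2).2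
  have hτpos : ∀ k, 1 ≤ k → k ≤ π.K → 0 < π.τ k := fun k h1 h2 =>
    (hseg k (Finset.mem_Icc.mpr ⟨h1, h2⟩)).2.1
  have hαnn : ∀ k, 1 ≤ k → k ≤ π.K → 0 ≤ π.α k := fun k h1 h2 =>
    (hseg k (Finset.mem_Icc.mpr ⟨h1, h2⟩)).1
  have hstep : ∀ k, 1 ≤ k → k < π.K → π.a (k + 1) + 1 = π.a k := by
    intro k h1 h2
    have h3 := hdec k h1 h2
    have h4 := halb (k + 1) (by omega) (by omega)
    omega
  have hTpos : ∀ k, 1 ≤ k → k ≤ π.K → 0 < π.Tsum k := fun k h1 h2 => Tsum_pos hπ h1 h2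
  have hAnn : ∀ k, k ≤ π.K → 0 ≤ ∑ j ∈ Finset.Icc 1 k, π.α j * π.τ j := by
    intro k h2
    apply Finset.sum_nonneg
    intro i hi
    rw [Finset.mem_Icc] at hi
    exact mul_nonneg (hαnn i hi.1 (by omega)) (hτpos i hi.1 (by omega)).le
  have hAdef : ∀ k, 1 ≤ k → k ≤ π.K →
      π.avg k * π.Tsum k = ∑ j ∈ Finset.Icc 1 k, π.α j * π.τ j := by
    intro k h1 h2
    rw [DSC.avg, div_mul_cancel₀ _ (hTpos k h1 h2).ne']
  have havnn : ∀ k, 1 ≤ k → k ≤ π.K → 0 ≤ π.avg k := by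
    intro k h1 h2
    exact div_nonneg (hAnn k h2) (hTpos k h1 h2).le
  have hbp : ∀ k, 1 ≤ k → k < π.K → π.avg k = β (π.a (k + 1)) := by
    intro k h1 h2
    have hi1 := hbr3 k (Finset.mem_Icc.mpr ⟨h1, by omega⟩)
    have hi2 := hbr4 (k + 1) (by omega) (by omega)
    rw [Nat.add_sub_cancel] at hi2
    have hx := havnn k h1 (by omega)
    have h5 := (hBR (π.avg k) hx (π.a k) (halb k h1 (by omega)) (haub k h1 (by omega))).mp hi1
    have h6 := (hBR (π.avg k) hx (π.a (k + 1)) (halb (k + 1) (by omega) (by omega))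
        (haub (k + 1) (by omega) (by omega))).mp hi2
    have hs := hstep k h1 h2
    have hlt : π.a (k + 1) < n := by
      have := haub k h1 (by omega); omega
    have h7 : β (π.a k - 1) ≤ π.avg k := h5.1
    rw [show π.a k - 1 = π.a (k + 1) by omega] at h7
    exact le_antisymm (h6.2 hlt) h7
  have hβmono : ∀ i, 1 ≤ i → i ≤ n - 1 → β 1 ≤ β i := by
    intro i
    induction i with
    | zero => intro h1 h2; omega
    | succ j ih =>
      intro h1 h2
      rcases Nat.eq_zero_or_pos j with hj | hj
      · subst hj; exact le_refl _
      · exact le_trans (ih hj (by omega)) (le_of_lt (hβinc j h2))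
  have havpos : ∀ k, 1 ≤ k → k < π.K → 0 < π.avg k := by
    intro k h1 h2
    rw [hbp k h1 h2]
    have h3 := halb (k + 1) (by omega) (by omega)
    have h4 := haub k h1 (by omega)
    have h5 := hstep k h1 h2
    exact lt_of_lt_of_le hβ1pos (hβmono _ h3 (by omega))
  have havdec : ∀ k, 1 ≤ k → k + 1 < π.K → π.avg (k + 1) < π.avg k := by
    intro k h1 h2
    rw [hbp k h1 (by omega), hbp (k + 1) (by omega) h2]
    have hs1 := hstep (k + 1) (by omega) h2
    have hs0 := hstep k h1 (by omega)
    have hub := haub k h1 (by omega)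
    have hlt := hβinc (π.a (k + 1 + 1)) (by omega)
    rw [hs1] at hlt
    exact hlt
  have hKm : π.K - 1 + 1 = π.K := by omega
  have havKle : π.avg π.K ≤ π.avg (π.K - 1) := by
    have hi1 := hbr3 π.K (Finset.mem_Icc.mpr ⟨by omega, le_rfl⟩)
    have h5 := (hBR (π.avg π.K) (havnn π.K (by omega) le_rfl) (π.a π.K)
        (halb π.K (by omega) le_rfl) (haub π.K (by omega) le_rfl)).mp hi1
    have hs := hstep (π.K - 1) (by omega) (by omega)
    rw [hKm] at hs
    have hub := haub (π.K - 1) (by omega) (by omega)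
    have hltn : π.a π.K < n := by omega
    have h6 := h5.2 hltn
    rw [hbp (π.K - 1) (by omega) (by omega), hKm]
    exact h6
  by_cases hy0 : π.avg π.K = 0
  · refine ⟨π, hπ, ?_, le_refl _⟩
    have hsum0 : ∑ j ∈ Finset.Icc 1 π.K, π.α j * π.τ j = 0 := by
      rw [← hAdef π.K (by omega) le_rfl, hy0, zero_mul]
    have hzero := (Finset.sum_eq_zero_iff_of_nonneg (fun j hj => by
      rw [Finset.mem_Icc] at hj
      exact mul_nonneg (hαnn j hj.1 hj.2) (hτpos j hj.1 hj.2).le)).mp hsum0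
    intro k h2 hk
    have h := hzero k (Finset.mem_Icc.mpr ⟨by omega, hk⟩)
    rcases mul_eq_zero.mp h with h | h
    · exact h
    · exact absurd h (hτpos k (by omega) hk).ne'
  have hypos : 0 < π.avg π.K := lt_of_le_of_ne (havnn π.K (by omega) le_rfl) (Ne.symm hy0)
  obtain ⟨k0, hk0mem, hk0max⟩ := Finset.exists_max_image (Finset.Icc 1 π.K)
    (fun k => ∑ j ∈ Finset.Icc k (π.K - 1),
      (1 / π.avg j) * ((expRew m F r (π.a j) - c (π.a j))
        - (expRew m F r (π.a (j + 1)) - c (π.a (j + 1)))))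
    ⟨π.K, Finset.mem_Icc.mpr ⟨by omega, le_rfl⟩⟩
  rw [Finset.mem_Icc] at hk0mem
  have hmax : ∀ k', 1 ≤ k' → k' ≤ π.K →
      (∑ j ∈ Finset.Icc k' (π.K - 1), (1 / π.avg j) * ((expRew m F r (π.a j) - c (π.a j))
          - (expRew m F r (π.a (j + 1)) - c (π.a (j + 1)))))
        ≤ ∑ j ∈ Finset.Icc k0 (π.K - 1), (1 / π.avg j) * ((expRew m F r (π.a j) - c (π.a j))
          - (expRew m F r (π.a (j + 1)) - c (π.a (j + 1)))) := by
    intro k' h1 h2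
    exact hk0max k' (Finset.mem_Icc.mpr ⟨h1, h2⟩)
  set S0 : ℝ := ∑ j ∈ Finset.Icc k0 (π.K - 1),
    (1 / π.avg j) * ((expRew m F r (π.a j) - c (π.a j))
      - (expRew m F r (π.a (j + 1)) - c (π.a (j + 1)))) with hS0def
  have hS0nn : 0 ≤ S0 := by
    have h := hmax π.K (by omega) le_rfl
    rwa [Finset.Icc_eq_empty (by omega : ¬ π.K ≤ π.K - 1), Finset.sum_empty] at h
  have hNbound : ∑ k ∈ Finset.Icc 1 (π.K - 1),
      π.Tsum k * ((expRew m F r (π.a k) - c (π.a k))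
        - (expRew m F r (π.a (k + 1)) - c (π.a (k + 1))))
      ≤ (∑ j ∈ Finset.Icc 1 π.K, π.α j * π.τ j) * S0 := by
    have hc1 : ∑ k ∈ Finset.Icc 1 (π.K - 1),
        π.Tsum k * ((expRew m F r (π.a k) - c (π.a k))
          - (expRew m F r (π.a (k + 1)) - c (π.a (k + 1))))
        = ∑ k ∈ Finset.Icc 1 (π.K - 1), (∑ j ∈ Finset.Icc 1 k, π.α j * π.τ j)
            * ((1 / π.avg k) * ((expRew m F r (π.a k) - c (π.a k))
              - (expRew m F r (π.a (k + 1)) - c (π.a (k + 1))))) := by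
      apply Finset.sum_congr rfl
      intro k hk
      rw [Finset.mem_Icc] at hk
      have hvp := (havpos k hk.1 (by omega)).ne'
      rw [← hAdef k hk.1 (by omega)]
      field_simp
    rw [hc1]
    refine sumBound (π.K - 1) (fun k => ∑ j ∈ Finset.Icc 1 k, π.α j * π.τ j)
      (fun k => (1 / π.avg k) * ((expRew m F r (π.a k) - c (π.a k))
        - (expRew m F r (π.a (k + 1)) - c (π.a (k + 1)))))
      (∑ j ∈ Finset.Icc 1 π.K, π.α j * π.τ j) S0 (by simp) ?_ ?_ ?_ hS0nn
    · intro k h1 h2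
      show (∑ j ∈ Finset.Icc 1 (k - 1), π.α j * π.τ j) ≤ ∑ j ∈ Finset.Icc 1 k, π.α j * π.τ j
      rw [asum_step π k h1]
      have := mul_nonneg (hαnn k h1 (by omega)) (hτpos k h1 (by omega)).le
      linarith
    · show (∑ j ∈ Finset.Icc 1 (π.K - 1), π.α j * π.τ j) ≤ ∑ j ∈ Finset.Icc 1 π.K, π.α j * π.τ j
      apply Finset.sum_le_sum_of_subset_of_nonneg
      · exact Finset.Icc_subset_Icc_right (by omega)
      · intro i hi _
        rw [Finset.mem_Icc] at hi
        exact mul_nonneg (hαnn i hi.1 hi.2) (hτpos i hi.1 hi.2).le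
    · intro k h1 h2
      exact hmax k h1 (by omega)
  have hUB : π.Util m F r p ≤ expRew m F r (π.a π.K) - π.avg π.K * expPay m F p (π.a π.K)
      + π.avg π.K * S0 := by
    rw [DSC.Util, lemA r hπ, div_le_iff₀ (hTpos π.K (by omega) le_rfl)]
    have hAK := hAdef π.K (by omega) le_rfl
    rw [← hAK] at hNbound ⊢
    nlinarith [hNbound]
  rcases Nat.eq_or_lt_of_le hk0mem.2 with hk0K | hk0K
  · -- k0 = π.K : single-segment free fall at the last action
    subst hk0K
    have hval := SFF_valid hπ (show 1 ≤ π.K by omega) le_rfl le_rfl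
      (fun k h1 h2 => absurd (lt_of_le_of_lt h1 h2) (lt_irrefl _))
      (fun k h1 h2 => by rw [le_antisymm h2 h1]; exact hypos)
    have hutil := SFF_util r hπ (show 1 ≤ π.K by omega) le_rfl le_rfl
      (fun k h1 h2 => absurd (lt_of_le_of_lt h1 h2) (lt_irrefl _))
      (fun k h1 h2 => by rw [le_antisymm h2 h1]; exact hypos)
    refine ⟨SFF π π.K π.K, hval, SFF_freefall _ _ _, ?_⟩
    rw [ge_iff_le, hutil]
    have hempty : Finset.Icc π.K (π.K - 1) = ∅ := Finset.Icc_eq_empty (by omega)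
    rw [hempty, Finset.sum_empty, mul_zero, add_zero]
    have hz : S0 = 0 := by rw [hS0def, hempty, Finset.sum_empty]
    rw [hz] at hUB
    linarith [hUB]
  · rcases lt_or_eq_of_le havKle with hltK | heqK
    · -- strictly decreasing at the end : free fall over segments k0..K
      have hmono : ∀ k, k0 ≤ k → k < π.K → π.avg (k + 1) < π.avg k := by
        intro k h1 h2
        rcases Nat.lt_or_ge (k + 1) π.K with h3 | h3
        · exact havdec k (by omega) h3
        · have he : k = π.K - 1 := by omega
          rw [he, hKm]
          exact hltK
      have hpos : ∀ k, k0 ≤ k → k ≤ π.K → 0 < π.avg k := by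
        intro k h1 h2
        rcases Nat.lt_or_ge k π.K with h3 | h3
        · exact havpos k (by omega) h3
        · rw [show k = π.K by omega]; exact hypos
      have hval := SFF_valid hπ (show 1 ≤ k0 by omega) (by omega) le_rfl hmono hpos
      have hutil := SFF_util r hπ (show 1 ≤ k0 by omega) (by omega) le_rfl hmono hpos
      refine ⟨SFF π k0 π.K, hval, SFF_freefall _ _ _, ?_⟩
      rw [ge_iff_le, hutil, ← hS0def]
      exact hUB
    · -- avg K = avg (K-1) : free fall over segments k0..K-1
      have hmono : ∀ k, k0 ≤ k → k < π.K - 1 → π.avg (k + 1) < π.avg k :=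
        fun k h1 h2 => havdec k (by omega) (by omega)
      have hpos : ∀ k, k0 ≤ k → k ≤ π.K - 1 → 0 < π.avg k :=
        fun k h1 h2 => havpos k (by omega) (by omega)
      have hval := SFF_valid hπ (show 1 ≤ k0 by omega) (by omega : k0 ≤ π.K - 1)
        (by omega) hmono hpos
      have hutil := SFF_util r hπ (show 1 ≤ k0 by omega) (by omega : k0 ≤ π.K - 1)
        (by omega) hmono hpos
      refine ⟨SFF π k0 (π.K - 1), hval, SFF_freefall _ _ _, ?_⟩
      rw [ge_iff_le, hutil]
      have htie := tieLem hπ (show 1 ≤ π.K - 1 by omega) (show π.K - 1 < π.K by omega)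
      rw [hKm] at htie
      have hsplit := Finset.sum_Icc_succ_top (show k0 ≤ π.K - 1 - 1 + 1 by omega)
        (fun j => (1 / π.avg j) * ((expRew m F r (π.a j) - c (π.a j))
          - (expRew m F r (π.a (j + 1)) - c (π.a (j + 1)))))
      rw [show π.K - 1 - 1 + 1 = π.K - 1 by omega] at hsplit
      rw [hS0def, hsplit] at hUB
      have hv1 : 0 < π.avg (π.K - 1) := havpos _ (by omega) (by omega)
      have hraw : π.avg (π.K - 1) * ((1 / π.avg (π.K - 1))
          * ((expRew m F r (π.a (π.K - 1)) - c (π.a (π.K - 1)))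
            - (expRew m F r (π.a (π.K - 1 + 1)) - c (π.a (π.K - 1 + 1)))))
          = (expRew m F r (π.a (π.K - 1)) - c (π.a (π.K - 1)))
            - (expRew m F r (π.a π.K) - c (π.a π.K)) := by
        rw [hKm]
        field_simp
      rw [hKm] at hraw
      rw [heqK, hKm] at hUB
      linarith [hUB, htie, hraw]
end

section
/- There exist universal constants c₁, c₂ > 0 and N₀ such that for every n ≥ N₀ there is a linear contract instance with n actions with the following properties: (i) the optimal static principal utility R_⋆ := max_{1≤i≤n} (1 − α_{i−1,i})·R_i (with α_{0,1} := 0) satisfies 1 ≤ R_⋆ ≤ 2, and under an optimal static contract the agent's best-response utility max_i (α·R_i − c_i) equals 0; (ii) there exists a valid free-fall dynamic linear contract π with principal utility Util(π) ≥ c₁·n and agent time-averaged utility UtilA(π) ≥ c₂·log₂ n. In particular, the optimal dynamic contract improves expected welfare over the best static contract by a multiplicative factor Ω(n), while improving the agent's utility by an additive Ω(log n). -/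
open Finset

/-- Indifference point `α_{i,i+1}` between actions `i` and `i+1`. -/
noncomputable def indiff (c R : ℕ → ℝ) (i : ℕ) : ℝ :=
  (c (i + 1) - c i) / (R (i + 1) - R i)

/-- Breakpoint `α_{i,i+1}` with the convention `α_{0,1} := 0`. -/
noncomputable def bp (c R : ℕ → ℝ) (i : ℕ) : ℝ :=
  if i = 0 then 0 else indiff c R i

/-- A linear contract instance with `n ≥ 2` actions indexed `1,…,n`:
costs `0 = c_1 < … < c_n`, rewards `0 ≤ R_1 < … < R_n`, and indifference
points satisfying `0 < α_{1,2} < … < α_{n-1,n} ≤ 1`. -/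
def LinInstance (n : ℕ) (c R : ℕ → ℝ) : Prop :=
  2 ≤ n ∧ c 1 = 0 ∧ 0 ≤ R 1 ∧
    (∀ i, 1 ≤ i → i < n → c i < c (i + 1)) ∧
    (∀ i, 1 ≤ i → i < n → R i < R (i + 1)) ∧
    0 < indiff c R 1 ∧
    (∀ i, 1 ≤ i → i + 1 ≤ n - 1 → indiff c R i < indiff c R (i + 1)) ∧
    indiff c R (n - 1) ≤ 1

/-- Best-response set of the agent to the linear contract with scalar `x`. -/
def BR (n : ℕ) (c R : ℕ → ℝ) (x : ℝ) : Set ℕ :=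
  {i | i ∈ Finset.Icc 1 n ∧ ∀ j ∈ Finset.Icc 1 n, x * R j - c j ≤ x * R i - c i}

/-- A dynamic linear contract with `K` segments (indexed `1,…,K`):
scalars `α`, durations `τ`, and actions `a`. -/
structure DLC where
  K : ℕ
  α : ℕ → ℝ
  τ : ℕ → ℝ
  a : ℕ → ℕ

namespace DLC

/-- Total duration of the first `k` segments. -/
noncomputable def Tsum (π : DLC) (k : ℕ) : ℝ := ∑ j ∈ Finset.Icc 1 k, π.τ j

/-- Cumulative scalar contract of the first `k` segments. -/
noncomputable def Asum (π : DLC) (k : ℕ) : ℝ := ∑ j ∈ Finset.Icc 1 k, π.α j * π.τ j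

/-- Time-averaged contract `ᾱ^k` after the first `k` segments. -/
noncomputable def avg (π : DLC) (k : ℕ) : ℝ := π.Asum k / π.Tsum k

/-- Validity: positive durations, nonnegative scalars, actions in `{1,…,n}`,
and each action is a best response to the historical average contract at the
end of its segment, and (for `k ≥ 2`) also at its beginning. -/
def Valid (n : ℕ) (c R : ℕ → ℝ) (π : DLC) : Prop :=
  1 ≤ π.K ∧
    (∀ k ∈ Finset.Icc 1 π.K, 0 ≤ π.α k ∧ 0 < π.τ k ∧ π.a k ∈ Finset.Icc 1 n) ∧
    (∀ k ∈ Finset.Icc 1 π.K, π.a k ∈ BR n c R (π.avg k)) ∧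
    (∀ k, 2 ≤ k → k ≤ π.K → π.a k ∈ BR n c R (π.avg (k - 1)))

/-- Time-averaged principal utility. -/
noncomputable def Util (R : ℕ → ℝ) (π : DLC) : ℝ :=
  (∑ k ∈ Finset.Icc 1 π.K, π.τ k * (1 - π.α k) * R (π.a k)) / π.Tsum π.K

/-- Time-averaged agent utility. -/
noncomputable def UtilA (c R : ℕ → ℝ) (π : DLC) : ℝ :=
  (∑ k ∈ Finset.Icc 1 π.K, π.τ k * (π.α k * R (π.a k) - c (π.a k))) / π.Tsum π.K

/-- Free-fall: the zero contract is offered on every segment after the first. -/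
def FreeFall (π : DLC) : Prop := ∀ k, 2 ≤ k → k ≤ π.K → π.α k = 0

/-- Cumulative principal utility `u_P^{(t)}(π)` up to time `t`. -/
noncomputable def cumUtil (R : ℕ → ℝ) (π : DLC) (t : ℝ) : ℝ :=
  ∑ k ∈ Finset.Icc 1 π.K,
    (min t (π.Tsum k) - min t (π.Tsum (k - 1))) * (1 - π.α k) * R (π.a k)

/-- Cumulative scalar contract `A^{(t)}` up to time `t`. -/
noncomputable def cumA (π : DLC) (t : ℝ) : ℝ :=
  ∑ k ∈ Finset.Icc 1 π.K, (min t (π.Tsum k) - min t (π.Tsum (k - 1))) * π.α k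

end DLC

/-! ### Auxiliary construction -/

noncomputable def gfun : ℕ → ℝ := fun j => 1 - (1/2 : ℝ) ^ j
noncomputable def Rf : ℕ → ℝ := fun i => 2 ^ (i - 1)
noncomputable def cf : ℕ → ℝ := fun i => 2 ^ (i - 1) - 1 - ((i : ℝ) - 1) / 2

lemma halfpow (j : ℕ) : (1/2:ℝ)^j * 2^j = 1 := by rw [← mul_pow]; norm_num

lemma gfun_zero : gfun 0 = 0 := by simp [gfun]

lemma gfun_nonneg (j : ℕ) : 0 ≤ gfun j := by
  have : (1/2:ℝ)^j ≤ 1 := pow_le_one₀ (by norm_num) (by norm_num)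
  simp only [gfun]; linarith

lemma gfun_le_one (j : ℕ) : gfun j ≤ 1 := by
  have : (0:ℝ) ≤ (1/2:ℝ)^j := by positivity
  simp only [gfun]; linarith

lemma gfun_mono {j k : ℕ} (h : j ≤ k) : gfun j ≤ gfun k := by
  have : (1/2:ℝ)^k ≤ (1/2:ℝ)^j := pow_le_pow_of_le_one (by norm_num) (by norm_num) h
  simp only [gfun]; linarith

lemma gfun_lt {j k : ℕ} (h : j < k) : gfun j < gfun k := by
  have : (1/2:ℝ)^k < (1/2:ℝ)^j := pow_lt_pow_right_of_lt_one₀ (by norm_num) (by norm_num) h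
  simp only [gfun]; linarith

lemma gfun_half {j : ℕ} (h : 1 ≤ j) : (1/2:ℝ) ≤ gfun j := by
  have h2 : (1/2:ℝ)^j ≤ (1/2:ℝ)^1 := pow_le_pow_of_le_one (by norm_num) (by norm_num) h
  simp only [pow_one] at h2
  simp only [gfun]; linarith

lemma gfun_pos {j : ℕ} (h : 1 ≤ j) : 0 < gfun j := lt_of_lt_of_le (by norm_num) (gfun_half h)

lemma gfun_ne {j : ℕ} (h : 1 ≤ j) : gfun j ≠ 0 := ne_of_gt (gfun_pos h)

lemma gstep (j : ℕ) : gfun (j+1) - gfun j = (1/2:ℝ)^(j+1) := by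
  simp only [gfun, pow_succ]; ring

lemma Rstep {i : ℕ} (h : 1 ≤ i) : Rf (i+1) - Rf i = 2^(i-1) := by
  obtain ⟨j, rfl⟩ : ∃ j, i = j + 1 := ⟨i-1, by omega⟩
  simp only [Rf, Nat.add_sub_cancel, pow_succ]; ring

lemma cstep {i : ℕ} (h : 1 ≤ i) : cf (i+1) - cf i = gfun i * (Rf (i+1) - Rf i) := by
  obtain ⟨j, rfl⟩ : ∃ j, i = j + 1 := ⟨i-1, by omega⟩
  simp only [cf, gfun, Rf, Nat.add_sub_cancel]
  push_cast
  linear_combination (1/2:ℝ) * halfpow j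

lemma Rf_pos (i : ℕ) : 0 < Rf i := by simp only [Rf]; positivity

lemma indiff_eq {i : ℕ} (h : 1 ≤ i) : indiff cf Rf i = gfun i := by
  have h2 : (2:ℝ)^(i-1) ≠ 0 := by positivity
  rw [indiff, cstep h, Rstep h]
  rw [mul_div_assoc, div_self h2, mul_one]

lemma ustep (x : ℝ) {l : ℕ} (h : 1 ≤ l) :
    (x * Rf (l+1) - cf (l+1)) - (x * Rf l - cf l) = (x - gfun l) * 2^(l-1) := by
  have h1 := Rstep h
  have h2 := cstep h
  linear_combination (x - gfun l) * h1 - h2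

lemma mem_BR {n i : ℕ} (hi1 : 1 ≤ i) (hin : i ≤ n) {x : ℝ}
    (hl : gfun (i-1) ≤ x) (hr : x ≤ gfun i) : i ∈ BR n cf Rf x := by
  constructor
  · exact Finset.mem_Icc.mpr ⟨hi1, hin⟩
  · intro j hj
    rw [Finset.mem_Icc] at hj
    -- upchain: ∀ d k, 1 ≤ k → k + d = i → u k ≤ u i
    have up : ∀ d k, 1 ≤ k → k + d = i → x * Rf k - cf k ≤ x * Rf i - cf i := by
      intro d
      induction d with
      | zero =>
        intro k hk he
        have hki : k = i := by omega
        subst hki; exact le_refl _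
      | succ d ih =>
        intro k hk he
        have h1 : x * Rf k - cf k ≤ x * Rf (k+1) - cf (k+1) := by
          have hs := ustep x hk
          have hg : gfun k ≤ x := le_trans (gfun_mono (by omega : k ≤ i - 1)) hl
          nlinarith [pow_pos (by norm_num : (0:ℝ) < 2) (k-1)]
        exact le_trans h1 (ih (k+1) (by omega) (by omega))
    have down : ∀ k, i ≤ k → x * Rf k - cf k ≤ x * Rf i - cf i := by
      intro k hk
      induction k, hk using Nat.le_induction with
      | base => exact le_refl _
      | succ k hk ih =>
        have h1 : x * Rf (k+1) - cf (k+1) ≤ x * Rf k - cf k := by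
          have hs := ustep x (le_trans hi1 hk)
          have hg : x ≤ gfun k := le_trans hr (gfun_mono hk)
          nlinarith [pow_pos (by norm_num : (0:ℝ) < 2) (k-1)]
        exact le_trans h1 ih
    rcases le_or_gt j i with hji | hij
    · exact up (i - j) j hj.1 (by omega)
    · exact down j (le_of_lt hij)

/-- The free-fall contract descending from action `n` to action `n/2 + 1`. -/
noncomputable def ffc (n : ℕ) : DLC where
  K := n - n/2
  α := fun k => if k = 1 then gfun (n-1) else 0
  τ := fun k => if k = 1 then 1 else gfun (n-1)/gfun (n-k) - gfun (n-1)/gfun (n-k+1)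
  a := fun k => n + 1 - k

lemma ffc_tau_pos {n : ℕ} (hn : 2 ≤ n) {k : ℕ} (hk : 1 ≤ k) (hk2 : k ≤ n - n/2) :
    0 < (ffc n).τ k := by
  rcases eq_or_lt_of_le hk with h1 | h2
  · simp [ffc, ← h1]
  · have hk1 : k ≠ 1 := by omega
    simp only [ffc, hk1, if_false]
    have h1 : 1 ≤ n - k := by omega
    have hlt : gfun (n-k) < gfun (n-k+1) := gfun_lt (by omega)
    have hA : 0 < gfun (n-1) := gfun_pos (by omega)
    have := div_lt_div_of_pos_left hA (gfun_pos h1) hlt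
    linarith

lemma ffc_Tsum {n : ℕ} (hn : 2 ≤ n) : ∀ k, 1 ≤ k → k ≤ n - n/2 →
    (ffc n).Tsum k = gfun (n-1) / gfun (n-k) := by
  intro k hk
  induction k, hk using Nat.le_induction with
  | base =>
    intro _
    rw [DLC.Tsum, Finset.Icc_self, Finset.sum_singleton]
    have ht : (ffc n).τ 1 = 1 := by simp [ffc]
    rw [ht, div_self (gfun_ne (by omega))]
  | succ k hk ih =>
    intro hk2
    have hsum : (ffc n).Tsum (k+1) = (ffc n).Tsum k + (ffc n).τ (k+1) := by
      rw [DLC.Tsum, DLC.Tsum, Finset.sum_Icc_succ_top (by omega : 1 ≤ k+1)]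
    rw [hsum, ih (by omega)]
    have hk1 : k + 1 ≠ 1 := by omega
    simp only [ffc, hk1, if_false]
    have he1 : n - (k+1) + 1 = n - k := by omega
    rw [he1]
    have he2 : n - (k+1) = n - k - 1 := by omega
    ring

lemma ffc_Asum {n : ℕ} (hn : 2 ≤ n) : ∀ k, 1 ≤ k →
    (ffc n).Asum k = gfun (n-1) := by
  intro k hk
  induction k, hk using Nat.le_induction with
  | base =>
    rw [DLC.Asum, Finset.Icc_self, Finset.sum_singleton]
    simp [ffc]
  | succ k hk ih =>
    rw [DLC.Asum, Finset.sum_Icc_succ_top (by omega : 1 ≤ k+1)]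
    rw [DLC.Asum] at ih
    rw [ih]
    have hk1 : k + 1 ≠ 1 := by omega
    simp [ffc, hk1, show k ≠ 0 by omega]

lemma ffc_avg {n : ℕ} (hn : 2 ≤ n) {k : ℕ} (hk : 1 ≤ k) (hk2 : k ≤ n - n/2) :
    (ffc n).avg k = gfun (n-k) := by
  rw [DLC.avg, ffc_Asum hn k hk, ffc_Tsum hn k hk hk2]
  have hA : gfun (n-1) ≠ 0 := gfun_ne (by omega)
  have hg : gfun (n-k) ≠ 0 := gfun_ne (by omega)
  field_simp
lemma ffc_freefall (n : ℕ) : (ffc n).FreeFall := by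
  intro k h2 _
  show (if k = 1 then gfun (n-1) else 0) = 0
  rw [if_neg (by omega)]

lemma ffc_valid {n : ℕ} (hn : 2 ≤ n) : (ffc n).Valid n cf Rf := by
  have hKd : (ffc n).K = n - n/2 := rfl
  refine ⟨by rw [hKd]; omega, ?_, ?_, ?_⟩
  · intro k hk
    rw [hKd, Finset.mem_Icc] at hk
    refine ⟨?_, ffc_tau_pos hn hk.1 hk.2, ?_⟩
    · show (0:ℝ) ≤ if k = 1 then gfun (n-1) else 0
      split
      · exact gfun_nonneg _
      · exact le_refl 0
    · show n + 1 - k ∈ Finset.Icc 1 n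
      rw [Finset.mem_Icc]
      omega
  · intro k hk
    rw [hKd, Finset.mem_Icc] at hk
    rw [ffc_avg hn hk.1 hk.2]
    show n + 1 - k ∈ BR n cf Rf (gfun (n-k))
    refine mem_BR (by omega) (by omega) ?_ ?_
    · exact gfun_mono (by omega)
    · exact gfun_mono (by omega)
  · intro k h2 hk
    rw [hKd] at hk
    rw [ffc_avg hn (show 1 ≤ k-1 by omega) (show k-1 ≤ n - n/2 by omega)]
    show n + 1 - k ∈ BR n cf Rf (gfun (n-(k-1)))
    refine mem_BR (by omega) (by omega) ?_ ?_
    · exact gfun_mono (by omega)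
    · exact gfun_mono (by omega)

lemma ffc_util {n : ℕ} (hn : 2 ≤ n) : (ffc n).Util Rf ≥ (n:ℝ)/16 := by
  have hKd : (ffc n).K = n - n/2 := rfl
  set K := n - n/2 with hKdef
  have hK1 : 1 ≤ K := by omega
  have hKn : K ≤ n - 1 := by omega
  have hterm : ∀ k ∈ Finset.Icc 1 K,
      (1/4:ℝ) ≤ (ffc n).τ k * (1 - (ffc n).α k) * Rf ((ffc n).a k) := by
    intro k hk
    rw [Finset.mem_Icc] at hk
    rcases eq_or_lt_of_le hk.1 with h1 | h2
    · -- k = 1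
      have eτ : (ffc n).τ 1 = 1 := by simp [ffc]
      have eα : (ffc n).α 1 = gfun (n-1) := by simp [ffc]
      have ea : (ffc n).a 1 = n := by show n + 1 - 1 = n; omega
      rw [← h1, eτ, eα, ea, one_mul]
      have hval : (1 - gfun (n-1)) * Rf n = 1 := by
        simp only [gfun, Rf, sub_sub_cancel]
        exact halfpow (n-1)
      rw [hval]; norm_num
    · -- k ≥ 2
      have hj1 : 1 ≤ n - k := by omega
      have eα : (ffc n).α k = 0 := by
        show (if k = 1 then gfun (n-1) else 0) = 0
        rw [if_neg (by omega)]
      have ea : Rf ((ffc n).a k) = 2^(n-k) := by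
        show Rf (n + 1 - k) = _
        simp only [Rf]
        congr 1
        omega
      have eτ : (ffc n).τ k = gfun (n-1)/gfun (n-k) - gfun (n-1)/gfun (n-k+1) := by
        show (if k = 1 then (1:ℝ) else _) = _
        rw [if_neg (by omega)]
      rw [eα, ea, sub_zero]
      have hgj := gfun_pos hj1
      have hgj1 := gfun_pos (show 1 ≤ n-k+1 by omega)
      have hτge : (1/2:ℝ) * (1/2)^(n-k+1) ≤ (ffc n).τ k := by
        rw [eτ, div_sub_div _ _ (ne_of_gt hgj) (ne_of_gt hgj1)]
        have hnum : gfun (n-1) * gfun (n-k+1) - gfun (n-k) * gfun (n-1)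
            = gfun (n-1) * (1/2)^(n-k+1) := by
          linear_combination gfun (n-1) * gstep (n-k)
        rw [hnum, le_div_iff₀ (by positivity)]
        have hd1 : gfun (n-k) * gfun (n-k+1) ≤ 1 :=
          mul_le_one₀ (gfun_le_one _) (le_of_lt hgj1) (gfun_le_one _)
        have hA : (1/2:ℝ) ≤ gfun (n-1) := gfun_half (by omega)
        have hs : (0:ℝ) < (1/2:ℝ)^(n-k+1) := by positivity
        nlinarith
      have h2j : (0:ℝ) < (2:ℝ)^(n-k) := by positivity
      calc (1/4:ℝ) = (1/2) * (1/2)^(n-k+1) * 2^(n-k) := by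
            rw [pow_succ]
            linear_combination (-(1/4:ℝ)) * halfpow (n-k)
        _ ≤ (ffc n).τ k * 2^(n-k) := mul_le_mul_of_nonneg_right hτge (le_of_lt h2j)
        _ = (ffc n).τ k * 1 * 2^(n-k) := by ring
  have hcard : (Finset.Icc 1 K).card = K := by rw [Nat.card_Icc]; omega
  have hsum : (K:ℝ) * (1/4) ≤
      ∑ k ∈ Finset.Icc 1 K, (ffc n).τ k * (1 - (ffc n).α k) * Rf ((ffc n).a k) := by
    have h0 : ∑ _k ∈ Finset.Icc 1 K, (1/4:ℝ) = (K:ℝ) * (1/4) := by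
      rw [Finset.sum_const, hcard, nsmul_eq_mul]
    rw [← h0]
    exact Finset.sum_le_sum hterm
  have hT : (ffc n).Tsum K = gfun (n-1) / gfun (n-K) := ffc_Tsum hn K hK1 le_rfl
  have hm1 : 1 ≤ n - K := by omega
  have hTpos : 0 < (ffc n).Tsum K := by
    rw [hT]; exact div_pos (gfun_pos (by omega)) (gfun_pos hm1)
  have hT2 : (ffc n).Tsum K ≤ 2 := by
    rw [hT, div_le_iff₀ (gfun_pos hm1)]
    have h1 := gfun_half hm1
    have h2 := gfun_le_one (n-1)
    linarith
  rw [DLC.Util, hKd, ge_iff_le]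
  set NP := ∑ k ∈ Finset.Icc 1 K, (ffc n).τ k * (1 - (ffc n).α k) * Rf ((ffc n).a k) with hNP
  have hNPpos : (0:ℝ) ≤ NP := le_trans (by positivity) hsum
  have hd : NP / 2 ≤ NP / (ffc n).Tsum K := div_le_div_of_nonneg_left hNPpos hTpos hT2
  have h2K : (n:ℝ) ≤ 2 * K := by
    have : n ≤ 2 * K := by omega
    exact_mod_cast this
  linarith

lemma ffc_FA {n : ℕ} (hn : 2 ≤ n) : ∀ j, 1 ≤ j → j ≤ n - n/2 →
    ∑ k ∈ Finset.Icc 1 j, (ffc n).τ k * ((ffc n).α k * Rf ((ffc n).a k) - cf ((ffc n).a k))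
      = (ffc n).Tsum j * (gfun (n-j) * Rf (n-j+1) - cf (n-j+1)) := by
  intro j hj
  induction j, hj using Nat.le_induction with
  | base =>
    intro _
    rw [Finset.Icc_self, Finset.sum_singleton]
    have hT1 : (ffc n).Tsum 1 = 1 := by
      rw [ffc_Tsum hn 1 le_rfl (by omega), div_self (gfun_ne (by omega))]
    have ea : (ffc n).a 1 = n := by show n + 1 - 1 = n; omega
    have eτ : (ffc n).τ 1 = 1 := by simp [ffc]
    have eα : (ffc n).α 1 = gfun (n-1) := by simp [ffc]
    rw [hT1, one_mul, show n - 1 + 1 = n from by omega, ea, eτ, eα, one_mul]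
  | succ j hj ih =>
    intro hj2
    rw [Finset.sum_Icc_succ_top (by omega : 1 ≤ j+1), ih (by omega)]
    have hi2 : 2 ≤ n - j := by omega
    have e1 : n - (j+1) = n - j - 1 := by omega
    have e2 : n - j - 1 + 1 = n - j := by omega
    have ea : (ffc n).a (j+1) = n - j := by show n + 1 - (j+1) = n - j; omega
    have eα : (ffc n).α (j+1) = 0 := by
      show (if j+1 = 1 then gfun (n-1) else 0) = 0
      rw [if_neg (by omega)]
    have eτ : (ffc n).τ (j+1) = gfun (n-1)/gfun (n-j-1) - gfun (n-1)/gfun (n-j) := by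
      show (if j+1 = 1 then (1:ℝ) else _) = _
      rw [if_neg (by omega), e1, e2]
    rw [ea, eα, eτ]
    rw [ffc_Tsum hn j (by omega) (by omega), ffc_Tsum hn (j+1) (by omega) hj2, e1, e2]
    have hc : cf (n-j+1) = cf (n-j) + gfun (n-j) * (Rf (n-j+1) - Rf (n-j)) := by
      have := cstep (show 1 ≤ n-j by omega)
      linarith
    rw [hc]
    have hg1 : gfun (n-j) ≠ 0 := gfun_ne (by omega)
    have hg2 : gfun (n-j-1) ≠ 0 := gfun_ne (by omega)
    field_simp
    ring

lemma ffc_utilA {n : ℕ} (hn : 2 ≤ n) : (ffc n).UtilA cf Rf = ((n/2 : ℕ):ℝ)/2 := by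
  have hKd : (ffc n).K = n - n/2 := rfl
  have hK1 : 1 ≤ n - n/2 := by omega
  rw [DLC.UtilA, hKd, ffc_FA hn _ hK1 le_rfl]
  have hT : (ffc n).Tsum (n - n/2) = gfun (n-1) / gfun (n-(n-n/2)) :=
    ffc_Tsum hn _ hK1 le_rfl
  have hTpos : 0 < (ffc n).Tsum (n - n/2) := by
    rw [hT]; exact div_pos (gfun_pos (by omega)) (gfun_pos (by omega))
  rw [mul_comm, mul_div_assoc, div_self (ne_of_gt hTpos), mul_one]
  rw [show n - (n - n/2) = n/2 from by omega]
  simp only [gfun, Rf, cf, Nat.add_sub_cancel]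
  push_cast
  linear_combination (-(1:ℝ)) * halfpow (n/2)
/-- There are universal constants `c₁, c₂ > 0` and `N₀` such
that for every `n ≥ N₀` some linear contract instance with `n` actions has:
(i) optimal static principal utility `R⋆ = max_i (1 − α_{i-1,i})·R_i ∈ [1, 2]`,
with an optimal static contract under which the agent's best-response utility
is `0`; and (ii) a valid free-fall dynamic linear contract giving the principal
at least `c₁·n` and the agent at least `c₂·log₂ n` (time-averaged). -/
theorem unbounded_win_win :
    ∃ (c₁ c₂ : ℝ) (N₀ : ℕ), 0 < c₁ ∧ 0 < c₂ ∧
      ∀ n, N₀ ≤ n → ∃ c R : ℕ → ℝ, LinInstance n c R ∧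
        ∃ Rstar : ℝ,
          IsGreatest ((fun i => (1 - bp c R (i - 1)) * R i) '' Set.Icc 1 n) Rstar ∧
          1 ≤ Rstar ∧ Rstar ≤ 2 ∧
          (∃ αstar : ℝ, 0 ≤ αstar ∧ ∃ i, i ∈ BR n c R αstar ∧
            (1 - αstar) * R i = Rstar ∧ αstar * R i - c i = 0) ∧
          ∃ π : DLC, π.Valid n c R ∧ π.FreeFall ∧
            π.Util R ≥ c₁ * n ∧ π.UtilA c R ≥ c₂ * Real.logb 2 n := by
  refine ⟨1/16, 1/4, 2, by norm_num, by norm_num, ?_⟩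
  intro n hn
  refine ⟨cf, Rf, ?_, 1, ?_, le_rfl, by norm_num, ?_, ?_⟩
  · -- LinInstance
    refine ⟨hn, by norm_num [cf], by norm_num [Rf], ?_, ?_, ?_, ?_, ?_⟩
    · intro i h1 _
      have h3 : cf (i+1) - cf i = gfun i * 2^(i-1) := by rw [cstep h1, Rstep h1]
      have h4 := mul_pos (gfun_pos h1) (pow_pos (by norm_num : (0:ℝ) < 2) (i-1))
      linarith
    · intro i h1 _
      have h3 := Rstep h1
      have h4 := pow_pos (by norm_num : (0:ℝ) < 2) (i-1)
      linarith
    · rw [indiff_eq le_rfl]; exact gfun_pos le_rfl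
    · intro i h1 _
      rw [indiff_eq h1, indiff_eq (by omega : 1 ≤ i + 1)]
      exact gfun_lt (by omega)
    · rw [indiff_eq (by omega : 1 ≤ n - 1)]; exact gfun_le_one _
  · -- IsGreatest
    constructor
    · refine ⟨1, ⟨le_rfl, by omega⟩, ?_⟩
      norm_num [bp, Rf]
    · rintro y ⟨i, hi, rfl⟩
      obtain ⟨hi1, hin⟩ := hi
      show (1 - bp cf Rf (i-1)) * Rf i ≤ 1
      rcases eq_or_lt_of_le hi1 with h1 | h2
      · rw [← h1]
        norm_num [bp, Rf]
      · have e0 : i - 1 ≠ 0 := by omega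
        rw [bp, if_neg e0, indiff_eq (by omega : 1 ≤ i - 1)]
        have hval : (1 - gfun (i-1)) * Rf i = 1 := by
          simp only [gfun, Rf, sub_sub_cancel]
          have e1 : i - 1 = i - 1 := rfl
          exact halfpow (i-1)
        rw [hval]
  · -- optimal static contract
    refine ⟨0, le_rfl, 1, ?_, by norm_num [Rf], by norm_num [cf]⟩
    exact mem_BR le_rfl (by omega) (le_of_eq gfun_zero) (gfun_nonneg 1)
  · -- dynamic contract
    refine ⟨ffc n, ffc_valid hn, ffc_freefall n, ?_, ?_⟩
    · have h := ffc_util hn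
      rw [ge_iff_le]
      rw [ge_iff_le] at h
      linarith
    · rw [ge_iff_le, ffc_utilA hn]
      have hlogle : Real.logb 2 (n:ℝ) ≤ (n:ℝ) - 1 := by
        have h1 : (n:ℝ) ≤ 2^(n-1) := by
          have h2 : n ≤ 2^(n-1) := by
            have h5 := Nat.succ_le_of_lt (Nat.lt_two_pow_self (n := n-1))
            calc n = n - 1 + 1 := by omega
              _ ≤ 2^(n-1) := h5
          exact_mod_cast h2
        have h3 : Real.logb 2 (n:ℝ) ≤ Real.logb 2 ((2:ℝ)^(n-1)) :=
          Real.logb_le_logb_of_le (by norm_num) (by positivity) h1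
        have h4 : Real.logb 2 ((2:ℝ)^(n-1)) = ((n-1 : ℕ):ℝ) := by
          rw [Real.logb_pow, Real.logb_self_eq_one (by norm_num)]
          ring
        rw [h4] at h3
        have h5 : ((n-1:ℕ):ℝ) = (n:ℝ) - 1 := by
          have : (1:ℕ) ≤ n := by omega
          push_cast [this]
          ring
        rw [h5] at h3
        exact h3
      have hm : (n:ℝ) - 1 ≤ 2 * ((n/2 : ℕ):ℝ) := by
        have h6 : n ≤ 2 * (n/2) + 1 := by omega
        have h7 : (n:ℝ) ≤ 2 * ((n/2:ℕ):ℝ) + 1 := by exact_mod_cast h6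
        linarith
      linarith
end

section
/- Fix a linear contract instance with optimal static principal utility R_⋆ := max_{1≤i≤n} (1 − α_{i−1,i})·R_i > 0 (with α_{0,1} := 0), and let Φ := Σ_{i=1}^{n−1} (α_{i,i+1} − α_{i−1,i})·R_i. Let ε > 0 and γ > exp(Φ/(ε·R_⋆)). Then there is no valid dynamic linear contract π with α^k ≤ α_{n−1,n} for all k and total duration T := Σ_k τ^k such that the cumulative principal utility satisfies u_P^{(t)}(π) ≥ (1+ε)·R_⋆·t for every t ∈ [T/γ, T]. (No dynamic contract can maintain a (1+ε)-multiplicative advantage over the optimal static contract throughout a time window of multiplicative width exceeding exp(Φ/(ε·R_⋆)).) -/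
open Finset

section Auxiliary

variable {n : ℕ} {c R : ℕ → ℝ}

lemma lin_R_mono (h : LinInstance n c R) {i j : ℕ} (h1 : 1 ≤ i) (hij : i ≤ j) (hj : j ≤ n) :
    R i ≤ R j := by
  induction j, hij using Nat.le_induction with
  | base => exact le_refl _
  | succ m hm ih =>
    have hmn : m < n := by omega
    exact le_trans (ih (by omega)) (le_of_lt (h.2.2.2.2.1 m (by omega) hmn))

lemma lin_R_nonneg (h : LinInstance n c R) {i : ℕ} (h1 : 1 ≤ i) (hn : i ≤ n) : 0 ≤ R i :=
  le_trans h.2.2.1 (lin_R_mono h le_rfl h1 hn)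

lemma lin_bp_zero (c R : ℕ → ℝ) : bp c R 0 = 0 := if_pos rfl

lemma lin_bp_succ_lt (h : LinInstance n c R) {i : ℕ} (hi : i + 1 ≤ n - 1) :
    bp c R i < bp c R (i + 1) := by
  cases i with
  | zero => simpa [bp] using h.2.2.2.2.2.1
  | succ m =>
    have := h.2.2.2.2.2.2.1 (m + 1) (by omega) hi
    simpa [bp] using this

lemma lin_bp_strict (h : LinInstance n c R) {i j : ℕ} (hij : i < j) (hj : j ≤ n - 1) :
    bp c R i < bp c R j := by
  induction j with
  | zero => omega
  | succ m ih =>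
    rcases Nat.lt_succ_iff_lt_or_eq.mp hij with hlt | heq
    · exact lt_trans (ih hlt (by omega)) (lin_bp_succ_lt h hj)
    · subst heq; exact lin_bp_succ_lt h hj

lemma lin_bp_mono (h : LinInstance n c R) {i j : ℕ} (hij : i ≤ j) (hj : j ≤ n - 1) :
    bp c R i ≤ bp c R j := by
  rcases Nat.lt_or_ge i j with hlt | hge
  · exact le_of_lt (lin_bp_strict h hlt hj)
  · have : i = j := le_antisymm hij hge
    simp [this]

lemma lin_bp_nonneg (h : LinInstance n c R) {i : ℕ} (hi : i ≤ n - 1) : 0 ≤ bp c R i := by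
  have := lin_bp_mono h (Nat.zero_le i) hi
  simpa [lin_bp_zero] using this

lemma lin_BR_lb (h : LinInstance n c R) {x : ℝ} (hx : 0 ≤ x) {i : ℕ}
    (hi : i ∈ BR n c R x) : bp c R (i - 1) ≤ x := by
  obtain ⟨him, hmax⟩ := hi
  simp only [Finset.mem_Icc] at him
  rcases Nat.lt_or_ge i 2 with h1 | h2
  · have : i = 1 := by omega
    simpa [this, lin_bp_zero] using hx
  · have hj : i - 1 ∈ Finset.Icc 1 n := by simp only [Finset.mem_Icc]; omega
    have hkey := hmax (i - 1) hj
    have hRlt : R (i - 1) < R i := by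
      have := h.2.2.2.2.1 (i - 1) (by omega) (by omega)
      rwa [Nat.sub_add_cancel (by omega)] at this
    have : bp c R (i - 1) = (c i - c (i - 1)) / (R i - R (i - 1)) := by
      have hne : i - 1 ≠ 0 := by omega
      simp only [bp, hne, if_neg, indiff, Nat.sub_add_cancel (show 1 ≤ i by omega)]
      simp
    rw [this, div_le_iff₀ (by linarith)]
    nlinarith [hkey]

lemma lin_BR_ub (h : LinInstance n c R) {x : ℝ} {i : ℕ}
    (hi : i ∈ BR n c R x) (hin : i ≤ n - 1) : x ≤ bp c R i := by
  obtain ⟨him, hmax⟩ := hi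
  simp only [Finset.mem_Icc] at him
  have hn2 : 2 ≤ n := h.1
  have hj : i + 1 ∈ Finset.Icc 1 n := by simp only [Finset.mem_Icc]; omega
  have hkey := hmax (i + 1) hj
  have hRlt : R i < R (i + 1) := h.2.2.2.2.1 i him.1 (by omega)
  have hbp : bp c R i = (c (i + 1) - c i) / (R (i + 1) - R i) := by
    have hne : i ≠ 0 := by omega
    simp [bp, hne, indiff]
  rw [hbp, le_div_iff₀ (by linarith)]
  nlinarith [hkey]

/-- Prefix sums of the potential. -/
noncomputable def Phip (c R : ℕ → ℝ) (j : ℕ) : ℝ :=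
  ∑ i ∈ Finset.Icc 1 j, (bp c R i - bp c R (i - 1)) * R i

/-- Per-action linear form of the potential function. -/
noncomputable def Hf (c R : ℕ → ℝ) (x : ℝ) (i : ℕ) : ℝ :=
  Phip c R (i - 1) + R i * (x - bp c R (i - 1))

lemma Phip_succ (c R : ℕ → ℝ) (j : ℕ) :
    Phip c R (j + 1) = Phip c R j + (bp c R (j + 1) - bp c R j) * R (j + 1) := by
  simp only [Phip]
  rw [Finset.sum_Icc_succ_top (by omega : 1 ≤ j + 1)]
  simp

lemma Phip_nonneg (h : LinInstance n c R) {j : ℕ} (hj : j ≤ n - 1) : 0 ≤ Phip c R j := by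
  apply Finset.sum_nonneg
  intro i hi
  simp only [Finset.mem_Icc] at hi
  have h1 : bp c R (i - 1) ≤ bp c R i := lin_bp_mono h (by omega) (by omega)
  have h2 : 0 ≤ R i := lin_R_nonneg h hi.1 (by omega)
  nlinarith

lemma Phip_mono (h : LinInstance n c R) {i j : ℕ} (hij : i ≤ j) (hj : j ≤ n - 1) :
    Phip c R i ≤ Phip c R j := by
  apply Finset.sum_le_sum_of_subset_of_nonneg (Finset.Icc_subset_Icc_right hij)
  intro k hk _
  simp only [Finset.mem_Icc] at hk
  have h1 : bp c R (k - 1) ≤ bp c R k := lin_bp_mono h (by omega) (by omega)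
  have h2 : 0 ≤ R k := lin_R_nonneg h hk.1 (by omega)
  nlinarith

lemma lin_cons_lt (h : LinInstance n c R) {x : ℝ} (hx0 : 0 ≤ x)
    (hxn : x ≤ bp c R (n - 1)) {i j : ℕ} (hij : i < j)
    (hi : i ∈ BR n c R x) (hj : j ∈ BR n c R x) : Hf c R x i = Hf c R x j := by
  have hiI : i ∈ Finset.Icc 1 n := hi.1
  have hjI : j ∈ Finset.Icc 1 n := hj.1
  simp only [Finset.mem_Icc] at hiI hjI
  have hjlb : bp c R (j - 1) ≤ x := lin_BR_lb h hx0 hj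
  have hiub : x ≤ bp c R i := by
    rcases Nat.lt_or_ge i (n - 1 + 1) with hlt | hge
    · exact lin_BR_ub h hi (by omega)
    · -- i ≥ n, impossible with i < j ≤ n
      omega
  have hji : j = i + 1 := by
    by_contra hne
    have hil : i < j - 1 := by omega
    have := lin_bp_strict h hil (by omega)
    linarith
  have hxeq : x = bp c R i := by
    have : bp c R (j - 1) = bp c R i := by rw [hji]; simp
    linarith
  subst hji
  rcases Nat.exists_eq_add_of_le hiI.1 with ⟨m, hm⟩
  have hi1 : i - 1 + 1 = i := by omega
  have hPh : Phip c R i = Phip c R (i-1) + (bp c R i - bp c R (i-1)) * R i := by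
    conv_lhs => rw [← hi1]
    rw [Phip_succ]
    rw [hi1]
  simp only [Hf, Nat.add_sub_cancel]
  rw [hxeq, hPh]
  ring

lemma lin_cons (h : LinInstance n c R) {x : ℝ} (hx0 : 0 ≤ x)
    (hxn : x ≤ bp c R (n - 1)) {i j : ℕ}
    (hi : i ∈ BR n c R x) (hj : j ∈ BR n c R x) : Hf c R x i = Hf c R x j := by
  rcases lt_trichotomy i j with hlt | heq | hgt
  · exact lin_cons_lt h hx0 hxn hlt hi hj
  · rw [heq]
  · exact (lin_cons_lt h hx0 hxn hgt hj hi).symm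

end Auxiliary

set_option maxHeartbeats 1000000 in
/-- If `γ > exp(Φ/(ε·R⋆))`, no valid dynamic linear contract
(with scalars capped at `α_{n-1,n}`) of total duration `T` maintains cumulative
principal utility at least `(1+ε)·R⋆·t` for every `t ∈ [T/γ, T]`. -/
theorem no_persistent_advantage (n : ℕ) (c R : ℕ → ℝ) (hInst : LinInstance n c R)
    (Rstar : ℝ)
    (hRstar : IsGreatest ((fun i => (1 - bp c R (i - 1)) * R i) '' Set.Icc 1 n) Rstar)
    (hRpos : 0 < Rstar)
    (Φ : ℝ) (hΦ : Φ = ∑ i ∈ Finset.Icc 1 (n - 1), (bp c R i - bp c R (i - 1)) * R i)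
    (ε γ : ℝ) (hε : 0 < ε) (hγ : Real.exp (Φ / (ε * Rstar)) < γ) :
    ¬ ∃ π : DLC, π.Valid n c R ∧
        (∀ k ∈ Finset.Icc 1 π.K, π.α k ≤ bp c R (n - 1)) ∧
        ∀ t ∈ Set.Icc (π.Tsum π.K / γ) (π.Tsum π.K),
          (1 + ε) * Rstar * t ≤ π.cumUtil R t := by
  rintro ⟨π, ⟨hK, hseg, hBRend, hBRstart⟩, hcap, hbound⟩
  have hεR : 0 < ε * Rstar := mul_pos hε hRpos
  have hn2 : 2 ≤ n := hInst.1
  have hΦeq : Φ = Phip c R (n - 1) := hΦ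
  have hΦ0 : 0 ≤ Φ := by rw [hΦeq]; exact Phip_nonneg hInst le_rfl
  have hγ1 : 1 < γ := by
    have h1 : (1 : ℝ) ≤ Real.exp (Φ / (ε * Rstar)) := by
      apply Real.one_le_exp
      positivity
    linarith
  have hγ0 : 0 < γ := by linarith
  -- segment data
  have hτpos : ∀ k, 1 ≤ k → k ≤ π.K → 0 < π.τ k := fun k h1 h2 =>
    (hseg k (Finset.mem_Icc.mpr ⟨h1, h2⟩)).2.1
  have hαnn : ∀ k, 1 ≤ k → k ≤ π.K → 0 ≤ π.α k := fun k h1 h2 =>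
    (hseg k (Finset.mem_Icc.mpr ⟨h1, h2⟩)).1
  have haI : ∀ k, 1 ≤ k → k ≤ π.K → 1 ≤ π.a k ∧ π.a k ≤ n := fun k h1 h2 =>
    Finset.mem_Icc.mp (hseg k (Finset.mem_Icc.mpr ⟨h1, h2⟩)).2.2
  have hT0 : π.Tsum 0 = 0 := by simp [DLC.Tsum]
  have hA0 : π.Asum 0 = 0 := by simp [DLC.Asum]
  have htmono : ∀ j k, j ≤ k → k ≤ π.K → π.Tsum j ≤ π.Tsum k := by
    intro j k hjk hkK
    apply Finset.sum_le_sum_of_subset_of_nonneg (Finset.Icc_subset_Icc_right hjk)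
    intro i hi _
    simp only [Finset.mem_Icc] at hi
    exact le_of_lt (hτpos i hi.1 (le_trans hi.2 hkK))
  have htpos : ∀ k, 1 ≤ k → k ≤ π.K → 0 < π.Tsum k := by
    intro k h1 h2
    apply Finset.sum_pos
    · intro i hi
      simp only [Finset.mem_Icc] at hi
      exact hτpos i hi.1 (le_trans hi.2 h2)
    · exact ⟨1, Finset.mem_Icc.mpr ⟨le_rfl, h1⟩⟩
  have htsucc : ∀ k, 1 ≤ k → π.Tsum k = π.Tsum (k - 1) + π.τ k := by
    intro k h1
    rcases k with _ | m
    · omega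
    · simp only [Nat.add_sub_cancel, DLC.Tsum]
      rw [Finset.sum_Icc_succ_top (by omega : 1 ≤ m + 1)]
  have hAsucc : ∀ k, 1 ≤ k → π.Asum k = π.Asum (k - 1) + π.α k * π.τ k := by
    intro k h1
    rcases k with _ | m
    · omega
    · simp only [Nat.add_sub_cancel, DLC.Asum]
      rw [Finset.sum_Icc_succ_top (by omega : 1 ≤ m + 1)]
  have hT : 0 < π.Tsum π.K := htpos π.K hK le_rfl
  set T := π.Tsum π.K with hTdef
  set t1 := T / γ with ht1def
  have ht1pos : 0 < t1 := div_pos hT hγ0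
  have ht1T : t1 ≤ T := by
    rw [ht1def]; exact div_le_self (le_of_lt hT) (le_of_lt hγ1)
  -- average bounds
  have hAnn : ∀ k, k ≤ π.K → 0 ≤ π.Asum k := by
    intro k hk
    apply Finset.sum_nonneg
    intro i hi
    simp only [Finset.mem_Icc] at hi
    exact mul_nonneg (hαnn i hi.1 (le_trans hi.2 hk)) (le_of_lt (hτpos i hi.1 (le_trans hi.2 hk)))
  have hAcap : ∀ k, k ≤ π.K → π.Asum k ≤ bp c R (n - 1) * π.Tsum k := by
    intro k hk
    rw [DLC.Tsum, Finset.mul_sum]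
    apply Finset.sum_le_sum
    intro i hi
    simp only [Finset.mem_Icc] at hi
    have h1 := hcap i (Finset.mem_Icc.mpr ⟨hi.1, le_trans hi.2 hk⟩)
    exact mul_le_mul_of_nonneg_right h1 (le_of_lt (hτpos i hi.1 (le_trans hi.2 hk)))
  have hav0 : ∀ k, 1 ≤ k → k ≤ π.K → 0 ≤ π.avg k := fun k h1 h2 =>
    div_nonneg (hAnn k h2) (le_of_lt (htpos k h1 h2))
  have havcap : ∀ k, 1 ≤ k → k ≤ π.K → π.avg k ≤ bp c R (n - 1) := by
    intro k h1 h2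
    rw [DLC.avg, div_le_iff₀ (htpos k h1 h2)]
    exact hAcap k h2
  -- static optimality bound
  have hstat : ∀ i, 1 ≤ i → i ≤ n → ∀ x : ℝ, bp c R (i - 1) ≤ x → (1 - x) * R i ≤ Rstar := by
    intro i h1 h2 x hx
    have hmem : (1 - bp c R (i - 1)) * R i ≤ Rstar :=
      hRstar.2 (Set.mem_image_of_mem _ (Set.mem_Icc.mpr ⟨h1, h2⟩))
    have hRn : 0 ≤ R i := lin_R_nonneg hInst h1 h2
    nlinarith
  have hB : ∀ i, 1 ≤ i → i ≤ n →
      R i + (Phip c R (i - 1) - R i * bp c R (i - 1)) ≤ Rstar + Φ := by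
    intro i h1 h2
    have h3 := hstat i h1 h2 (bp c R (i - 1)) le_rfl
    have h4 : Phip c R (i - 1) ≤ Φ := by
      rw [hΦeq]; exact Phip_mono hInst (by omega) le_rfl
    nlinarith
  -- cumulative utility formula
  have hCU : ∀ m, 1 ≤ m → m ≤ π.K → ∀ t, π.Tsum (m - 1) ≤ t → t ≤ π.Tsum m →
      π.cumUtil R t = (∑ j ∈ Finset.Icc 1 (m - 1), π.τ j * (1 - π.α j) * R (π.a j))
        + (t - π.Tsum (m - 1)) * (1 - π.α m) * R (π.a m) := by
    intro m h1 h2 t ht1 ht2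
    rw [DLC.cumUtil]
    have hIoc : Finset.Icc 1 π.K = Finset.Ioc 0 π.K := by
      rw [← Finset.Icc_add_one_left_eq_Ioc]; rfl
    rw [hIoc]
    rw [← Finset.sum_Ioc_consecutive _ (Nat.zero_le (m - 1)) (show m - 1 ≤ π.K by omega)]
    rw [← Finset.sum_Ioc_consecutive _ (show m - 1 ≤ m by omega) h2]
    have hmid : Finset.Ioc (m - 1) m = {m} := by
      ext x
      simp only [Finset.mem_Ioc, Finset.mem_singleton]
      omega
    have e1 : ∑ k ∈ Finset.Ioc 0 (m - 1),
        (min t (π.Tsum k) - min t (π.Tsum (k - 1))) * (1 - π.α k) * R (π.a k)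
        = ∑ j ∈ Finset.Icc 1 (m - 1), π.τ j * (1 - π.α j) * R (π.a j) := by
      rw [← Finset.Icc_add_one_left_eq_Ioc]
      apply Finset.sum_congr rfl
      intro j hj
      simp only [Finset.mem_Icc] at hj
      have hj2 : π.Tsum j ≤ t := le_trans (htmono j (m - 1) (by omega) (by omega)) ht1
      have hj3 : π.Tsum (j - 1) ≤ t :=
        le_trans (le_trans (htmono (j - 1) (m - 1) (by omega) (by omega)) ht1) le_rfl
      rw [min_eq_right hj2, min_eq_right hj3, htsucc j hj.1]
      ring
    have e2 : ∑ k ∈ Finset.Ioc (m - 1) m,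
        (min t (π.Tsum k) - min t (π.Tsum (k - 1))) * (1 - π.α k) * R (π.a k)
        = (t - π.Tsum (m - 1)) * (1 - π.α m) * R (π.a m) := by
      rw [hmid, Finset.sum_singleton, min_eq_left ht2, min_eq_right ht1]
    have e3 : ∑ k ∈ Finset.Ioc m π.K,
        (min t (π.Tsum k) - min t (π.Tsum (k - 1))) * (1 - π.α k) * R (π.a k) = 0 := by
      apply Finset.sum_eq_zero
      intro k hk
      simp only [Finset.mem_Ioc] at hk
      have hk1 : t ≤ π.Tsum (k - 1) :=
        le_trans ht2 (htmono m (k - 1) (by omega) (by omega))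
      have hk2 : t ≤ π.Tsum k := le_trans ht2 (htmono m k (by omega) hk.2)
      rw [min_eq_left hk2, min_eq_left hk1]
      ring
    rw [e1, e2, e3]
    ring
  -- abbreviations
  set S : ℕ → ℝ := fun k => ∑ j ∈ Finset.Icc 1 k, π.τ j * (1 - π.α j) * R (π.a j) with hSdef
  have hS0 : S 0 = 0 := by simp [hSdef]
  have hSsucc : ∀ k, 1 ≤ k → S k = S (k - 1) + π.τ k * (1 - π.α k) * R (π.a k) := by
    intro k h1
    rcases k with _ | m
    · omega
    · simp only [Nat.add_sub_cancel, hSdef]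
      rw [Finset.sum_Icc_succ_top (by omega : 1 ≤ m + 1)]
  set g : ℕ → ℝ := fun k => Hf c R (π.avg k) (π.a k) with hgdef
  have hg : ∀ k, g k = Hf c R (π.avg k) (π.a k) := fun k => rfl
  -- product identity
  have hTgId : ∀ m, m ≤ π.K → ∀ i,
      π.Tsum m * Hf c R (π.avg m) i
        = π.Tsum m * (Phip c R (i - 1) - R i * bp c R (i - 1)) + R i * π.Asum m := by
    intro m hm i
    rcases Nat.eq_zero_or_pos m with h0 | h1
    · subst h0; rw [hT0, hA0]; ring
    · have hTm : π.Tsum m ≠ 0 := ne_of_gt (htpos m h1 hm)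
      have h2 : π.Tsum m * π.avg m = π.Asum m := by
        rw [DLC.avg]; field_simp
      simp only [Hf]
      linear_combination R i * h2
  -- swap of actions across a boundary
  have hswap : ∀ k, 1 ≤ k → k + 1 ≤ π.K →
      g k = Hf c R (π.avg k) (π.a (k + 1)) := by
    intro k h1 h2
    rw [hg k]
    apply lin_cons hInst (hav0 k h1 (by omega)) (havcap k h1 (by omega))
    · exact hBRend k (Finset.mem_Icc.mpr ⟨h1, by omega⟩)
    · have := hBRstart (k + 1) (by omega) h2
      simpa using this
  -- W chain: potential-corrected utility is bounded
  have hWchain : ∀ k, k ≤ π.K → S k + π.Tsum k * g k ≤ (Rstar + Φ) * π.Tsum k := by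
    intro k hk
    induction k with
    | zero => rw [hS0, hT0]; simp
    | succ m ih =>
      have ihm := ih (by omega)
      have hm1K : m + 1 ≤ π.K := hk
      have ha := haI (m + 1) (by omega) hm1K
      have e1 : S (m + 1) = S m + π.τ (m + 1) * (1 - π.α (m + 1)) * R (π.a (m + 1)) := by
        have := hSsucc (m + 1) (by omega); simpa using this
      have e2 : π.Tsum (m + 1) = π.Tsum m + π.τ (m + 1) := by
        have := htsucc (m + 1) (by omega); simpa using this
      have e3 : π.Asum (m + 1) = π.Asum m + π.α (m + 1) * π.τ (m + 1) := by
        have := hAsucc (m + 1) (by omega); simpa using this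
      have e4 : π.Tsum (m + 1) * g (m + 1)
          = π.Tsum (m + 1) * (Phip c R (π.a (m + 1) - 1)
              - R (π.a (m + 1)) * bp c R (π.a (m + 1) - 1))
            + R (π.a (m + 1)) * π.Asum (m + 1) := by
        rw [hg]; exact hTgId (m + 1) hm1K (π.a (m + 1))
      have e5 : π.Tsum m * Hf c R (π.avg m) (π.a (m + 1))
          = π.Tsum m * (Phip c R (π.a (m + 1) - 1)
              - R (π.a (m + 1)) * bp c R (π.a (m + 1) - 1))
            + R (π.a (m + 1)) * π.Asum m := hTgId m (by omega) (π.a (m + 1))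
      have hswap' : π.Tsum m * g m = π.Tsum m * Hf c R (π.avg m) (π.a (m + 1)) := by
        rcases Nat.eq_zero_or_pos m with h0 | h1
        · rw [h0, hT0]; ring
        · rw [hswap m h1 hm1K]
      have hBa := hB (π.a (m + 1)) ha.1 ha.2
      have hτ := hτpos (m + 1) (by omega) hm1K
      have hstep : π.τ (m + 1) * (R (π.a (m + 1)) + (Phip c R (π.a (m + 1) - 1)
            - R (π.a (m + 1)) * bp c R (π.a (m + 1) - 1)))
          ≤ π.τ (m + 1) * (Rstar + Φ) :=
        mul_le_mul_of_nonneg_left hBa (le_of_lt hτ)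
      have key : S (m + 1) + π.Tsum (m + 1) * g (m + 1)
          = S m + π.Tsum m * g m + π.τ (m + 1) * (R (π.a (m + 1))
              + (Phip c R (π.a (m + 1) - 1) - R (π.a (m + 1)) * bp c R (π.a (m + 1) - 1))) := by
        linear_combination e1 + e4 - e5 - hswap'
          + (Phip c R (π.a (m + 1) - 1) - R (π.a (m + 1)) * bp c R (π.a (m + 1) - 1)) * e2
          + R (π.a (m + 1)) * e3
      have erhs : (Rstar + Φ) * π.Tsum (m + 1)
          = (Rstar + Φ) * π.Tsum m + π.τ (m + 1) * (Rstar + Φ) := by rw [e2]; ring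
      linarith
  -- locate t1
  have hk0ex : ∃ k, t1 ≤ π.Tsum k := ⟨π.K, ht1T⟩
  haveI : DecidablePred fun k => t1 ≤ π.Tsum k := Classical.decPred _
  set k0 := Nat.find hk0ex with hk0def
  have hk0le : t1 ≤ π.Tsum k0 := Nat.find_spec hk0ex
  have hk0K : k0 ≤ π.K := Nat.find_le ht1T
  have hk01 : 1 ≤ k0 := by
    by_contra h
    have h0 : k0 = 0 := by omega
    rw [h0, hT0] at hk0le
    linarith
  have hprev : π.Tsum (k0 - 1) < t1 := by
    have := Nat.find_min hk0ex (show k0 - 1 < k0 by omega)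
    push_neg at this
    exact this
  -- values at t1
  set D1 := S (k0 - 1) + (t1 - π.Tsum (k0 - 1)) * (1 - π.α k0) * R (π.a k0) with hD1def
  set A1 := π.Asum (k0 - 1) + π.α k0 * (t1 - π.Tsum (k0 - 1)) with hA1def
  set g1 := Phip c R (π.a k0 - 1) + R (π.a k0) * (A1 / t1 - bp c R (π.a k0 - 1)) with hg1def
  have hW1 : D1 + t1 * g1 ≤ (Rstar + Φ) * t1 := by
    have hk0K' : k0 - 1 ≤ π.K := by omega
    have ha := haI k0 hk01 hk0K
    have e5 := hTgId (k0 - 1) hk0K' (π.a k0)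
    have hswap' : π.Tsum (k0 - 1) * g (k0 - 1)
        = π.Tsum (k0 - 1) * Hf c R (π.avg (k0 - 1)) (π.a k0) := by
      rcases Nat.eq_zero_or_pos (k0 - 1) with h0 | h1
      · rw [h0, hT0]; ring
      · have hidx : k0 - 1 + 1 = k0 := by omega
        rw [hswap (k0 - 1) h1 (by omega), hidx]
    have e4' : t1 * g1 = t1 * (Phip c R (π.a k0 - 1) - R (π.a k0) * bp c R (π.a k0 - 1))
        + R (π.a k0) * A1 := by
      rw [hg1def]
      have ht1ne : t1 ≠ 0 := ne_of_gt ht1pos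
      field_simp
      ring
    have hWprev := hWchain (k0 - 1) hk0K'
    have hBa := hB (π.a k0) ha.1 ha.2
    have hu : (0:ℝ) ≤ t1 - π.Tsum (k0 - 1) := by linarith
    have hstep : (t1 - π.Tsum (k0 - 1)) * (R (π.a k0)
          + (Phip c R (π.a k0 - 1) - R (π.a k0) * bp c R (π.a k0 - 1)))
        ≤ (t1 - π.Tsum (k0 - 1)) * (Rstar + Φ) :=
      mul_le_mul_of_nonneg_left hBa hu
    have key : D1 + t1 * g1 = S (k0 - 1) + π.Tsum (k0 - 1) * g (k0 - 1)
        + (t1 - π.Tsum (k0 - 1)) * (R (π.a k0)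
            + (Phip c R (π.a k0 - 1) - R (π.a k0) * bp c R (π.a k0 - 1))) := by
      linear_combination hD1def + e4' + R (π.a k0) * hA1def - e5 - hswap'
    have erhs : (Rstar + Φ) * t1 = (Rstar + Φ) * π.Tsum (k0 - 1)
        + (Rstar + Φ) * (t1 - π.Tsum (k0 - 1)) := by ring
    linarith
  -- F step
  have hFstep : ∀ k, k0 ≤ k → k ≤ π.K → ∀ s Ds As gs : ℝ, 0 < s →
      π.Tsum (k - 1) ≤ s → s ≤ π.Tsum k →
      Ds = S (k - 1) + (s - π.Tsum (k - 1)) * (1 - π.α k) * R (π.a k) →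
      As = π.Asum (k - 1) + π.α k * (s - π.Tsum (k - 1)) →
      gs = Phip c R (π.a k - 1) + R (π.a k) * (As / s - bp c R (π.a k - 1)) →
      S k / π.Tsum k - Rstar + g k + ε * Rstar * Real.log (π.Tsum k) ≤
        Ds / s - Rstar + gs + ε * Rstar * Real.log s := by
    intro k hk0k hkK s Ds As gs hs hs1 hs2 hDs hAs hgs
    have hk1 : 1 ≤ k := le_trans hk01 hk0k
    have ht : 0 < π.Tsum k := htpos k hk1 hkK
    have ha := haI k hk1 hkK
    have haBR := hBRend k (Finset.mem_Icc.mpr ⟨hk1, hkK⟩)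
    have e1 : S k = S (k - 1) + π.τ k * (1 - π.α k) * R (π.a k) := hSsucc k hk1
    have e2 : π.Tsum k = π.Tsum (k - 1) + π.τ k := htsucc k hk1
    have e3 : π.Asum k = π.Asum (k - 1) + π.α k * π.τ k := hAsucc k hk1
    have e4 : π.Tsum k * g k
        = π.Tsum k * (Phip c R (π.a k - 1) - R (π.a k) * bp c R (π.a k - 1))
          + R (π.a k) * π.Asum k := by
      rw [hg]; exact hTgId k hkK (π.a k)
    have hVt : S k - Rstar * π.Tsum k + π.Tsum k * g k
        = (S k + R (π.a k) * π.Asum k - R (π.a k) * π.Tsum k)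
          + (R (π.a k) - Rstar + (Phip c R (π.a k - 1) - R (π.a k) * bp c R (π.a k - 1)))
            * π.Tsum k := by
      linear_combination e4
    have hsA : s * (As / s) = As := by field_simp
    have hVs : Ds - Rstar * s + s * gs
        = (S k + R (π.a k) * π.Asum k - R (π.a k) * π.Tsum k)
          + (R (π.a k) - Rstar + (Phip c R (π.a k - 1) - R (π.a k) * bp c R (π.a k - 1)))
            * s := by
      linear_combination hDs + s * hgs + R (π.a k) * hsA + R (π.a k) * hAs - e1
        - R (π.a k) * e3 + R (π.a k) * e2
    have hcu : π.cumUtil R (π.Tsum k) = S k := by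
      rw [hCU k hk1 hkK (π.Tsum k) (htmono (k - 1) k (by omega) hkK) le_rfl]
      linear_combination ((1 - π.α k) * R (π.a k)) * e2 - e1
    have ht1k : t1 ≤ π.Tsum k := le_trans hk0le (htmono k0 k hk0k hkK)
    have hTk : π.Tsum k ≤ T := htmono k π.K hkK le_rfl
    have hDk := hbound (π.Tsum k) (Set.mem_Icc.mpr ⟨ht1k, hTk⟩)
    rw [hcu] at hDk
    have h5 : (1 - π.avg k) * R (π.a k) ≤ Rstar :=
      hstat (π.a k) ha.1 ha.2 (π.avg k) (lin_BR_lb hInst (hav0 k hk1 hkK) haBR)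
    have h6 : π.Tsum k * ((1 - π.avg k) * R (π.a k))
        = R (π.a k) * π.Tsum k - R (π.a k) * π.Asum k := by
      rw [DLC.avg]; field_simp
    have h7 : π.Tsum k * ((1 - π.avg k) * R (π.a k)) ≤ π.Tsum k * Rstar :=
      mul_le_mul_of_nonneg_left h5 ht.le
    have haC : ε * Rstar * π.Tsum k
        ≤ S k + R (π.a k) * π.Asum k - R (π.a k) * π.Tsum k := by
      linarith [hDk, h6, h7]
    have hL : S k / π.Tsum k - Rstar + g k
        = (S k - Rstar * π.Tsum k + π.Tsum k * g k) / π.Tsum k := by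
      field_simp
    have hLs : Ds / s - Rstar + gs = (Ds - Rstar * s + s * gs) / s := by
      field_simp
    rw [hVt] at hL
    rw [hVs] at hLs
    have hsplit_t : ((S k + R (π.a k) * π.Asum k - R (π.a k) * π.Tsum k)
          + (R (π.a k) - Rstar + (Phip c R (π.a k - 1) - R (π.a k) * bp c R (π.a k - 1)))
            * π.Tsum k) / π.Tsum k
        = (S k + R (π.a k) * π.Asum k - R (π.a k) * π.Tsum k) / π.Tsum k
          + (R (π.a k) - Rstar + (Phip c R (π.a k - 1) - R (π.a k) * bp c R (π.a k - 1))) := by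
      field_simp
    have hsplit_s : ((S k + R (π.a k) * π.Asum k - R (π.a k) * π.Tsum k)
          + (R (π.a k) - Rstar + (Phip c R (π.a k - 1) - R (π.a k) * bp c R (π.a k - 1)))
            * s) / s
        = (S k + R (π.a k) * π.Asum k - R (π.a k) * π.Tsum k) / s
          + (R (π.a k) - Rstar + (Phip c R (π.a k - 1) - R (π.a k) * bp c R (π.a k - 1))) := by
      field_simp
    have hlog : Real.log (π.Tsum k) - Real.log s ≤ (π.Tsum k - s) / s := by
      have h := Real.log_le_sub_one_of_pos (div_pos ht hs)
      rw [Real.log_div (ne_of_gt ht) (ne_of_gt hs)] at h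
      have heq : π.Tsum k / s - 1 = (π.Tsum k - s) / s := by field_simp
      linarith [heq ▸ h]
    have hlog2 : ε * Rstar * (Real.log (π.Tsum k) - Real.log s)
        ≤ ε * Rstar * ((π.Tsum k - s) / s) :=
      mul_le_mul_of_nonneg_left hlog hεR.le
    have hdiff : (S k + R (π.a k) * π.Asum k - R (π.a k) * π.Tsum k) / s
          - (S k + R (π.a k) * π.Asum k - R (π.a k) * π.Tsum k) / π.Tsum k
        = (S k + R (π.a k) * π.Asum k - R (π.a k) * π.Tsum k)
            * ((π.Tsum k - s) / (s * π.Tsum k)) := by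
      field_simp
    have hq : 0 ≤ (π.Tsum k - s) / (s * π.Tsum k) :=
      div_nonneg (by linarith) (by positivity)
    have h8 : (ε * Rstar * π.Tsum k) * ((π.Tsum k - s) / (s * π.Tsum k))
        ≤ (S k + R (π.a k) * π.Asum k - R (π.a k) * π.Tsum k)
            * ((π.Tsum k - s) / (s * π.Tsum k)) :=
      mul_le_mul_of_nonneg_right haC hq
    have h9 : (ε * Rstar * π.Tsum k) * ((π.Tsum k - s) / (s * π.Tsum k))
        = ε * Rstar * ((π.Tsum k - s) / s) := by
      field_simp
    rw [hL, hLs, hsplit_t, hsplit_s]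
    linarith [hlog2, hdiff, h8, h9]
  -- F chain
  have hFchain : ∀ k, k0 ≤ k → k ≤ π.K →
      S k / π.Tsum k - Rstar + g k + ε * Rstar * Real.log (π.Tsum k) ≤
        D1 / t1 - Rstar + g1 + ε * Rstar * Real.log t1 := by
    intro k hk1
    induction k, hk1 using Nat.le_induction with
    | base =>
      intro _
      exact hFstep k0 le_rfl hk0K t1 D1 A1 g1 ht1pos hprev.le hk0le hD1def hA1def hg1def
    | succ m hm ih =>
      intro hk2
      have hmK : m ≤ π.K := by omega
      have ihm := ih hmK
      have hm1 : 1 ≤ m := le_trans hk01 hm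
      have hstep := hFstep (m + 1) (by omega) hk2 (π.Tsum m) (S m) (π.Asum m)
        (Hf c R (π.avg m) (π.a (m + 1))) (htpos m hm1 hmK)
        (by simp) (htmono m (m + 1) (by omega) hk2)
        (by simp) (by simp) (by simp [Hf, DLC.avg])
      have hgm : Hf c R (π.avg m) (π.a (m + 1)) = g m := (hswap m hm1 hk2).symm
      rw [hgm] at hstep
      exact le_trans hstep ihm
  have h1 : D1 / t1 + g1 ≤ Rstar + Φ := by
    rw [div_add' _ _ _ (ne_of_gt ht1pos), div_le_iff₀ ht1pos]
    linarith [hW1]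
  have hcuK : π.cumUtil R T = S π.K := by
    rw [hCU π.K hK le_rfl T (htmono (π.K - 1) π.K (by omega) le_rfl) le_rfl]
    linear_combination ((1 - π.α π.K) * R (π.a π.K)) * (htsucc π.K hK) - hSsucc π.K hK
  have hSK : (1 + ε) * Rstar * T ≤ S π.K := by
    have h := hbound T (Set.mem_Icc.mpr ⟨ht1T, le_rfl⟩)
    rwa [hcuK] at h
  have hSKdiv : ε * Rstar + Rstar ≤ S π.K / T := by
    rw [le_div_iff₀ hT]; nlinarith
  have hgK : 0 ≤ g π.K := by
    rw [hg]
    have ha := haI π.K hK le_rfl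
    have hBRK := hBRend π.K (Finset.mem_Icc.mpr ⟨hK, le_rfl⟩)
    have hp1 : 0 ≤ Phip c R (π.a π.K - 1) := Phip_nonneg hInst (by omega)
    have hp2 : bp c R (π.a π.K - 1) ≤ π.avg π.K := lin_BR_lb hInst (hav0 π.K hK le_rfl) hBRK
    have hp3 : 0 ≤ R (π.a π.K) := lin_R_nonneg hInst ha.1 ha.2
    have hp4 := mul_nonneg hp3 (by linarith : (0:ℝ) ≤ π.avg π.K - bp c R (π.a π.K - 1))
    simp only [Hf]
    linarith
  have hchain := hFchain π.K hk0K le_rfl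
  have hlogt1 : Real.log t1 = Real.log T - Real.log γ := by
    rw [ht1def, Real.log_div (ne_of_gt hT) (ne_of_gt hγ0)]
  have hlogγ : Φ / (ε * Rstar) < Real.log γ := by
    have h := Real.log_lt_log (Real.exp_pos _) hγ
    rwa [Real.log_exp] at h
  have hlogγ2 : Φ < ε * Rstar * Real.log γ := by
    rw [div_lt_iff₀ hεR] at hlogγ; linarith
  have hlt1 : ε * Rstar * Real.log t1
      = ε * Rstar * Real.log T - ε * Rstar * Real.log γ := by
    rw [hlogt1]; ring
  linarith [hchain, h1, hSKdiv, hgK, hlogγ2, hlt1, hεR]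
end
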